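/- arXiv:1404.2178 — 5 statements merged into one kernel-verified Lean document; each statement's English description precedes it below -/
import Mathlib

section
/- There exists a basic sequence Q = (q_n)_{n∈ℕ} of integers, each q_n ≥ 2 a power of 2, which is limit computable (i.e., there is a computable function g : ℕ × ℕ → ℕ with q_n = lim_{s→∞} g(s,n) for every n), such that no computable real number in [0,1] is Q-distribution-normal. -/
open scoped Classical

/-- A sequence of reals is uniformly distributed modulo 1. -/
def UnifDistMod1 (y : ℕ → ℝ) : Prop :=
  ∀ a b : ℝ, 0 ≤ a → a ≤ b → b ≤ 1 →
    Filter.Tendsto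
      (fun n => (((Finset.range n).filter
        (fun k => Int.fract (y k) ∈ Set.Icc a b)).card : ℝ) / (n : ℝ))
      Filter.atTop (nhds (b - a))

/-- `x` is distribution normal with respect to the basic sequence `Q`:
the sequence `x, q₀x, q₀q₁x, …` is uniformly distributed mod 1. -/
def QDistNormal (Q : ℕ → ℕ) (x : ℝ) : Prop :=
  UnifDistMod1 (fun k => (∏ i ∈ Finset.range k, (Q i : ℝ)) * x)

/-- The real with binary expansion `α`. -/
noncomputable def binVal (α : ℕ → Bool) : ℝ :=
  ∑' n : ℕ, (if α n then (1 : ℝ) else 0) / 2 ^ (n + 1)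

/-- A real in `[0,1]` is computable if it has a computable binary expansion. -/
def ComputableReal (x : ℝ) : Prop :=
  ∃ α : ℕ → Bool, Computable α ∧ x = binVal α

namespace LCBS

open Nat.Partrec (Code)
open Nat.Partrec.Code

/-- requirement served by position `k` -/
def req (k : ℕ) : ℕ := (Nat.unpair (Nat.log 4 k)).1

/-- stage-`s` search for the least `d` with digit `K+d+1` of machine `e` evaluating to `0` -/
def leastD (s K e : ℕ) : ℕ :=
  (List.range s).findIdx (fun d => decide (evaln s (Denumerable.ofNat Code e) (K + d + 1) = some 0))

def dAt (s K e : ℕ) : ℕ := if leastD s K e < s then leastD s K e + 1 else 1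

noncomputable def dLim (K e : ℕ) : ℕ :=
  if h : ∃ d, 0 ∈ eval (Denumerable.ofNat Code e) (K + d + 1) then Nat.find h + 1 else 1

def KAt (s : ℕ) : ℕ → ℕ
  | 0 => 0
  | k+1 => KAt s k + dAt s (KAt s k) (req (k+1))

noncomputable def KLim : ℕ → ℕ
  | 0 => 0
  | k+1 => KLim k + dLim (KLim k) (req (k+1))

noncomputable def Q (n : ℕ) : ℕ := 2 ^ (dLim (KLim n) (req (n+1)))

def g (s n : ℕ) : ℕ := 2 ^ (dAt s (KAt s n) (req (n+1)))

lemma one_le_dLim (K e : ℕ) : 1 ≤ dLim K e := by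
  unfold dLim; split <;> omega

lemma dAt_stab (K e : ℕ) : ∃ S, ∀ s, S ≤ s → dAt s K e = dLim K e := by
  unfold dLim
  split
  · rename_i h
    set d0 := Nat.find h with hd0
    have hmem : 0 ∈ eval (Denumerable.ofNat Code e) (K + d0 + 1) := Nat.find_spec h
    obtain ⟨s0, hs0⟩ := evaln_complete.1 hmem
    refine ⟨max s0 (d0 + 1), fun s hs => ?_⟩
    have hs0' : s0 ≤ s := le_trans (le_max_left _ _) hs
    have hd0s : d0 < s := lt_of_lt_of_le (Nat.lt_of_lt_of_le (Nat.lt_succ_self _) (le_max_right _ _)) hs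
    have hev : evaln s (Denumerable.ofNat Code e) (K + d0 + 1) = some 0 :=
      evaln_mono hs0' hs0
    have hleast : leastD s K e = d0 := by
      unfold leastD
      have hlen : d0 < (List.range s).length := by simpa using hd0s
      rw [List.findIdx_eq hlen]
      constructor
      · simpa [List.getElem_range] using hev
      · intro j hj
        simp only [List.getElem_range, decide_eq_false_iff_not]
        intro hcon
        have : 0 ∈ eval (Denumerable.ofNat Code e) (K + j + 1) := evaln_sound (Option.mem_def.2 hcon)
        exact absurd this (Nat.find_min h hj)
    rw [dAt, hleast, if_pos hd0s]
  · rename_i h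
    push_neg at h
    refine ⟨0, fun s _ => ?_⟩
    have hleast : leastD s K e = s := by
      unfold leastD
      have : ∀ x ∈ List.range s,
          decide (evaln s (Denumerable.ofNat Code e) (K + x + 1) = some 0) = false := by
        intro x _
        simp only [decide_eq_false_iff_not]
        intro hcon
        exact h x (evaln_sound (Option.mem_def.2 hcon))
      simpa using List.findIdx_eq_length_of_false this
    rw [dAt, hleast, if_neg (lt_irrefl s)]

lemma KAt_stab (n : ℕ) : ∃ S, ∀ s, S ≤ s → KAt s n = KLim n := by
  induction n with
  | zero => exact ⟨0, fun s _ => rfl⟩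
  | succ k ih =>
    obtain ⟨S1, hS1⟩ := ih
    obtain ⟨S2, hS2⟩ := dAt_stab (KLim k) (req (k+1))
    refine ⟨max S1 S2, fun s hs => ?_⟩
    have h1 := hS1 s (le_trans (le_max_left _ _) hs)
    have h2 := hS2 s (le_trans (le_max_right _ _) hs)
    simp [KAt, KLim, h1, h2]

lemma g_stab (n : ℕ) : ∃ S, ∀ s, S ≤ s → g s n = Q n := by
  obtain ⟨S1, hS1⟩ := KAt_stab n
  obtain ⟨S2, hS2⟩ := dAt_stab (KLim n) (req (n+1))
  refine ⟨max S1 S2, fun s hs => ?_⟩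
  rw [g, Q, hS1 s (le_trans (le_max_left _ _) hs), hS2 s (le_trans (le_max_right _ _) hs)]

lemma primrec_pow : Primrec₂ (fun a b : ℕ => a ^ b) := Primrec₂.unpaired'.mp Nat.Primrec.pow

lemma primrec_log4 : Primrec (Nat.log 4) := by
  have hp : PrimrecRel (fun (k t : ℕ) => 4 ^ t ≤ k) :=
    Primrec.nat_le.comp₂ (primrec_pow.comp₂ (Primrec₂.const 4) Primrec₂.right) Primrec₂.left
  refine (Primrec.nat_findGreatest Primrec.id hp).of_eq fun k => ?_
  rcases Nat.eq_zero_or_pos k with rfl | hk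
  · simp [Nat.findGreatest]
  · rw [Nat.findGreatest_eq_iff]
    refine ⟨(Nat.log_le_self 4 k), fun _ => Nat.pow_log_le_self 4 hk.ne', fun n hn _ hle => ?_⟩
    have h1 : k < 4 ^ (Nat.log 4 k + 1) := Nat.lt_pow_succ_log_self (by norm_num) k
    have h2 : (4:ℕ) ^ (Nat.log 4 k + 1) ≤ 4 ^ n := Nat.pow_le_pow_right (by norm_num) hn
    omega

lemma primrec_req : Primrec req :=
  Primrec.fst.comp (Primrec.unpair.comp primrec_log4)

lemma primrec_dAt : Primrec (fun a : ℕ × ℕ × ℕ => dAt a.1 a.2.1 a.2.2) := by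
  have hev : Primrec (fun q : (ℕ × ℕ × ℕ) × ℕ =>
      evaln q.1.1 (Denumerable.ofNat Code q.1.2.2) (q.1.2.1 + q.2 + 1)) := by
    have harg : Primrec (fun q : (ℕ × ℕ × ℕ) × ℕ =>
        ((q.1.1, Denumerable.ofNat Code q.1.2.2), q.1.2.1 + q.2 + 1)) :=
      ((Primrec.fst.comp Primrec.fst).pair
        ((Primrec.ofNat Code).comp (Primrec.snd.comp (Primrec.snd.comp Primrec.fst)))).pair
        (Primrec.succ.comp (Primrec.nat_add.comp
          (Primrec.fst.comp (Primrec.snd.comp Primrec.fst)) Primrec.snd))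
    exact primrec_evaln.comp harg
  have hleast : Primrec (fun a : ℕ × ℕ × ℕ => leastD a.1 a.2.1 a.2.2) :=
    Primrec.list_findIdx (Primrec.list_range.comp Primrec.fst)
      (Primrec.eq.decide.comp hev (Primrec.const (some 0))).to₂
  exact Primrec.ite (Primrec.nat_lt.comp hleast Primrec.fst)
    (Primrec.succ.comp hleast) (Primrec.const 1)

lemma primrec_KAt : Primrec₂ KAt := by
  have h := Primrec.nat_rec (f := fun (_ : ℕ) => (0:ℕ))
    (g := fun (s : ℕ) (p : ℕ × ℕ) => p.2 + dAt s p.2 (req (p.1+1)))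
    (Primrec.const 0)
    (Primrec.nat_add.comp (Primrec.snd.comp Primrec.snd)
      (primrec_dAt.comp (Primrec.fst.pair ((Primrec.snd.comp Primrec.snd).pair
        (primrec_req.comp (Primrec.succ.comp (Primrec.fst.comp Primrec.snd))))))).to₂
  refine h.of_eq fun s n => ?_
  induction n with
  | zero => rfl
  | succ k ih => simp [KAt, ih]

lemma computable_g : Computable₂ g := by
  have hg : Primrec₂ g := by
    have : Primrec (fun a : ℕ × ℕ => 2 ^ (dAt a.1 (KAt a.1 a.2) (req (a.2+1)))) :=
      primrec_pow.comp (Primrec.const 2)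
        (primrec_dAt.comp (Primrec.fst.pair ((primrec_KAt.comp Primrec.fst Primrec.snd).pair
          (primrec_req.comp (Primrec.succ.comp Primrec.snd)))))
    exact this.to₂
  exact hg.to_comp

lemma summable_half : Summable (fun n : ℕ => (1:ℝ) / 2 ^ (n+1)) := by
  refine (summable_geometric_two.mul_right (1/2)).congr fun n => ?_
  rw [← pow_succ, div_pow, one_pow]

lemma tsum_halves : ∑' n : ℕ, (1:ℝ)/2^(n+1) = 1 := by
  calc ∑' n : ℕ, (1:ℝ)/2^(n+1) = ∑' n : ℕ, (1:ℝ)/2/2^n :=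
        tsum_congr fun n => by rw [pow_succ]; ring
    _ = 1 := tsum_geometric_two' 1

lemma term_le (α : ℕ → Bool) (n : ℕ) :
    (if α n then (1:ℝ) else 0) / 2 ^ (n+1) ≤ 1/2^(n+1) := by
  split
  · exact le_refl _
  · rw [zero_div]
    positivity

lemma term_nonneg (α : ℕ → Bool) (n : ℕ) :
    0 ≤ (if α n then (1:ℝ) else 0) / 2 ^ (n+1) := by positivity

lemma summable_binVal (α : ℕ → Bool) :
    Summable (fun n : ℕ => (if α n then (1:ℝ) else 0) / 2 ^ (n+1)) :=
  Summable.of_nonneg_of_le (term_nonneg α) (term_le α) summable_half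

lemma binVal_nonneg (α : ℕ → Bool) : 0 ≤ binVal α :=
  tsum_nonneg fun n => term_nonneg α n

lemma binVal_le_one (α : ℕ → Bool) : binVal α ≤ 1 := by
  calc binVal α ≤ ∑' n : ℕ, (1:ℝ)/2^(n+1) :=
        Summable.tsum_le_tsum (term_le α) (summable_binVal α) summable_half
    _ = 1 := tsum_halves

lemma binVal_all_true {α : ℕ → Bool} (h : ∀ n, α n = true) : binVal α = 1 := by
  have : binVal α = ∑' n : ℕ, (1:ℝ)/2^(n+1) :=
    tsum_congr fun n => by rw [h n]; norm_num
  rw [this, tsum_halves]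

lemma binVal_lt_one {α : ℕ → Bool} {j : ℕ} (h : α j = false) : binVal α < 1 := by
  have hlt : binVal α < ∑' n : ℕ, (1:ℝ)/2^(n+1) := by
    refine Summable.tsum_lt_tsum_of_nonneg (i := j) (term_nonneg α) (term_le α) ?_ summable_half
    rw [h]
    norm_num
  calc binVal α < ∑' n : ℕ, (1:ℝ)/2^(n+1) := hlt
    _ = 1 := tsum_halves

lemma binVal_head (α : ℕ → Bool) :
    binVal α = (if α 0 then (1:ℝ) else 0)/2 + binVal (fun n => α (n+1)) / 2 := by
  rw [binVal, Summable.tsum_eq_zero_add (summable_binVal α)]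
  congr 1
  · norm_num
  · rw [binVal, ← tsum_div_const]
    refine tsum_congr fun n => ?_
    rw [div_div, ← pow_succ]

lemma binVal_le_half {α : ℕ → Bool} (h : α 0 = false) : binVal α ≤ 1/2 := by
  rw [binVal_head, h]
  have := binVal_le_one (fun n => α (n+1))
  norm_num
  linarith

lemma binVal_shift (α : ℕ → Bool) (K : ℕ) :
    ∃ S : ℕ, (2:ℝ)^K * binVal α = S + binVal (fun j => α (K + j)) := by
  refine ⟨∑ i ∈ Finset.range K, if α i then 2^(K-i-1) else 0, ?_⟩
  have hs := summable_binVal α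
  have hsplit := (Summable.sum_add_tsum_nat_add
    (f := fun n => (if α n then (1:ℝ) else 0) / 2 ^ (n+1)) K hs).symm
  rw [binVal, hsplit, mul_add]
  congr 1
  · rw [Finset.mul_sum]
    push_cast
    refine Finset.sum_congr rfl fun i hi => ?_
    have hiK : i < K := Finset.mem_range.1 hi
    split
    · have h2 : (2:ℝ)^(K-i-1) * 2^(i+1) = 2^K := by
        rw [← pow_add]
        congr 1
        omega
      field_simp
      linarith [h2]
    · simp
  · rw [← tsum_mul_left, binVal]
    refine tsum_congr fun n => ?_
    have h2 : (2:ℝ)^(n+K+1) = 2^(n+1) * 2^K := by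
      rw [← pow_add]
      congr 1
      omega
    rw [add_comm K n, h2]
    have h3 : (2:ℝ)^(n+1) ≠ 0 := by positivity
    have h4 : (2:ℝ)^K ≠ 0 := by positivity
    field_simp

lemma fract_mem_Icc {α : ℕ → Bool} {K : ℕ}
    (h : α K = false ∨ ∀ j, α (K + j) = true) :
    Int.fract ((2:ℝ)^K * binVal α) ∈ Set.Icc (0:ℝ) (1/2) := by
  obtain ⟨S, hS⟩ := binVal_shift α K
  rw [hS]
  rcases h with h | h
  · set β := fun j => α (K + j) with hβ
    have hβ0 : β 0 = false := by simpa [hβ] using h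
    have h1 : binVal β < 1 := binVal_lt_one hβ0
    have h0 : 0 ≤ binVal β := binVal_nonneg β
    have : Int.fract ((S:ℝ) + binVal β) = binVal β := by
      rw [show ((S:ℝ)) = ((S:ℤ):ℝ) by push_cast; ring, Int.fract_intCast_add,
        Int.fract_eq_self.2 ⟨h0, h1⟩]
    rw [this]
    exact ⟨h0, binVal_le_half hβ0⟩
  · rw [binVal_all_true h]
    have : ((S:ℝ) + 1) = ((S+1 : ℕ):ℝ) := by push_cast; ring
    rw [this, Int.fract_natCast]
    constructor <;> norm_num

lemma prod_Q (k : ℕ) : ∏ i ∈ Finset.range k, (Q i : ℝ) = 2 ^ (KLim k) := by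
  induction k with
  | zero => simp [KLim]
  | succ k ih =>
    rw [Finset.prod_range_succ, ih, show KLim (k+1) = KLim k + dLim (KLim k) (req (k+1)) from rfl,
      pow_add, Q]
    push_cast
    ring

lemma exists_code_for {α : ℕ → Bool} (hα : Computable α) :
    ∃ c : Code, eval c = fun n => Part.some (Encodable.encode (α n)) := by
  have h1 : Computable fun n => Encodable.encode (α n) := Computable.encode.comp hα
  have h2 : Nat.Partrec ((fun n => Encodable.encode (α n)) : ℕ →. ℕ) := Partrec.nat_iff.1 h1
  obtain ⟨c, hc⟩ := exists_code.1 h2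
  exact ⟨c, hc⟩

lemma dLim_pos_eq {c : Code} {K : ℕ} (h : ∃ d, 0 ∈ eval c (K + d + 1)) :
    dLim K (Encodable.encode c) = Nat.find h + 1 := by
  unfold dLim
  simp only [Denumerable.ofNat_encode]
  rw [dif_pos h]

lemma dLim_neg_eq {c : Code} {K : ℕ} (h : ¬ ∃ d, 0 ∈ eval c (K + d + 1)) :
    dLim K (Encodable.encode c) = 1 := by
  unfold dLim
  simp only [Denumerable.ofNat_encode]
  rw [dif_neg h]

lemma key {α : ℕ → Bool} {c : Code} (hc : eval c = fun n => Part.some (Encodable.encode (α n)))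
    (k : ℕ) (hk : req (k+1) = Encodable.encode c) :
    α (KLim (k+1)) = false ∨ ∀ j, α (KLim (k+1) + j) = true := by
  have hkl : KLim (k+1) = KLim k + dLim (KLim k) (req (k+1)) := rfl
  rw [hkl, hk]
  by_cases h : ∃ d, 0 ∈ eval c (KLim k + d + 1)
  · left
    rw [dLim_pos_eq h, ← add_assoc]
    have hspec := Nat.find_spec h
    rw [congrFun hc (KLim k + Nat.find h + 1)] at hspec
    have h0 : Encodable.encode (α (KLim k + Nat.find h + 1)) = 0 :=
      (Part.mem_some_iff.1 hspec).symm
    cases hh : α (KLim k + Nat.find h + 1)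
    · rfl
    · rw [hh] at h0; simp at h0
  · right
    rw [dLim_neg_eq h]
    push_neg at h
    intro j
    have h2 := h j
    rw [congrFun hc (KLim k + j + 1)] at h2
    cases hh : α (KLim k + j + 1)
    · exfalso
      apply h2
      rw [Part.mem_some_iff, hh]
      rfl
    · rw [show KLim k + 1 + j = KLim k + j + 1 from by ring]
      exact hh

end LCBS

theorem limit_computable_basic_sequence_defeating_computable_reals :
    ∃ Q : ℕ → ℕ,
      (∀ n, 2 ≤ Q n) ∧
      (∀ n, ∃ k : ℕ, Q n = 2 ^ k) ∧
      (∃ g : ℕ → ℕ → ℕ, Computable₂ g ∧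
        ∀ n, ∃ N, ∀ s, N ≤ s → g s n = Q n) ∧
      (∀ x : ℝ, x ∈ Set.Icc (0 : ℝ) 1 → ComputableReal x → ¬ QDistNormal Q x) := by
  refine ⟨LCBS.Q, fun n => ?_, fun n => ⟨_, rfl⟩, ⟨LCBS.g, LCBS.computable_g, LCBS.g_stab⟩, ?_⟩
  · calc (2:ℕ) = 2^1 := rfl
      _ ≤ 2^(LCBS.dLim (LCBS.KLim n) (LCBS.req (n+1))) :=
        Nat.pow_le_pow_right (by norm_num) (LCBS.one_le_dLim _ _)
  · rintro x - ⟨α, hα, rfl⟩ hQDN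
    obtain ⟨c, hc⟩ := LCBS.exists_code_for hα
    have htend := hQDN 0 (1/2) le_rfl (by norm_num) (by norm_num)
    rw [show (1/2 - 0 : ℝ) = 1/2 by norm_num] at htend
    have hev := htend.eventually_lt_const (show (1/2:ℝ) < 3/4 by norm_num)
    obtain ⟨M, hM⟩ := Filter.eventually_atTop.1 hev
    set e := Encodable.encode c with he
    set t := Nat.pair e M with ht
    set N := 4^(t+1) with hN
    have htN : t < N := lt_of_lt_of_le (Nat.lt_pow_self (n := t) (by norm_num : 1 < 4))
      (Nat.pow_le_pow_right (by norm_num) t.le_succ)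
    have hMN : M ≤ N := le_trans (Nat.right_le_pair e M) htN.le
    have hNpos : 0 < N := by positivity
    have hN' : N = 4 * 4^t := by rw [hN]; ring
    have hkey : ∀ k, k ∈ Finset.Ico (4^t) N →
        Int.fract ((∏ i ∈ Finset.range k, (LCBS.Q i : ℝ)) * binVal α) ∈
          Set.Icc (0:ℝ) (1/2) := by
      intro k hk
      obtain ⟨h1, h2⟩ := Finset.mem_Ico.1 hk
      have hlog : Nat.log 4 k = t := Nat.log_eq_of_pow_le_of_lt_pow h1 h2
      have hreq : LCBS.req k = e := by rw [LCBS.req, hlog, ht, Nat.unpair_pair]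
      have hkpos : 1 ≤ k := le_trans (Nat.one_le_pow _ _ (by norm_num)) h1
      obtain ⟨k', rfl⟩ : ∃ k', k = k'+1 := ⟨k-1, by omega⟩
      rw [LCBS.prod_Q]
      exact LCBS.fract_mem_Icc (LCBS.key hc k' hreq)
    have hlt := hM N hMN
    apply absurd hlt
    push_neg
    rw [le_div_iff₀ (show (0:ℝ) < N from by exact_mod_cast hNpos)]
    calc ((3:ℝ)/4) * N = ((3 * 4^t : ℕ) : ℝ) := by rw [hN']; push_cast; ring
      _ ≤ _ := by
        apply Nat.cast_le.2
        calc 3 * 4^t = (Finset.Ico (4^t) N).card := by rw [Nat.card_Ico]; omega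
          _ ≤ _ := Finset.card_le_card (fun k hk => Finset.mem_filter.2
              ⟨Finset.mem_range.2 (Finset.mem_Ico.1 hk).2, hkey k hk⟩)
end

section
/- Let f : ℕ → ℕ be strictly increasing with f(0) = 0, let α : ℕ → Bool not end in an infinite string of 1's, and set q_n = 2^{f(n+1) − f(n)} for each n and Q = (q_n)_{n∈ℕ}. Suppose there are infinitely many n ∈ ℕ such that |{p < n : α(f(p)) = false}| ≥ (2/3)·n or |{p < n : α(f(p)) = true}| ≥ (2/3)·n. Then the real x_α = Σ_{n∈ℕ} α(n)·2^{−(n+1)} is not Q-distribution-normal. -/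
open scoped Classical

lemma binTerm_nonneg (α : ℕ → Bool) (n : ℕ) :
    0 ≤ (if α n then (1 : ℝ) else 0) / 2 ^ (n + 1) := by positivity

lemma binTerm_le (α : ℕ → Bool) (n : ℕ) :
    (if α n then (1 : ℝ) else 0) / 2 ^ (n + 1) ≤ 1 / 2 ^ (n + 1) := by
  gcongr
  split <;> norm_num

lemma summable_geom_half : Summable (fun n : ℕ => (1 : ℝ) / 2 ^ (n + 1)) := by
  refine Summable.of_nonneg_of_le (fun n => by positivity) (fun n => ?_) summable_geometric_two
  rw [← one_div_pow]
  exact pow_le_pow_of_le_one (by norm_num) (by norm_num) (Nat.le_succ n)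

lemma tsum_geom_half : ∑' n : ℕ, (1 : ℝ) / 2 ^ (n + 1) = 1 := by
  have : (fun n : ℕ => (1 : ℝ) / 2 ^ (n + 1)) = fun n => (1 : ℝ) / 2 / 2 ^ n := by
    funext n; rw [pow_succ]; ring
  rw [this, tsum_geometric_two']

lemma summable_binTerm (α : ℕ → Bool) :
    Summable (fun n => (if α n then (1 : ℝ) else 0) / 2 ^ (n + 1)) :=
  Summable.of_nonneg_of_le (binTerm_nonneg α) (binTerm_le α) summable_geom_half

lemma binVal_nonneg (α : ℕ → Bool) : 0 ≤ binVal α :=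
  tsum_nonneg (binTerm_nonneg α)

lemma binVal_le_one (α : ℕ → Bool) : binVal α ≤ 1 :=
  le_of_le_of_eq
    (Summable.tsum_le_tsum (binTerm_le α) (summable_binTerm α) summable_geom_half) tsum_geom_half

lemma binVal_lt_one (α : ℕ → Bool) (k : ℕ) (hk : α k = false) : binVal α < 1 := by
  refine lt_of_lt_of_eq
    (Summable.tsum_lt_tsum_of_nonneg (binTerm_nonneg α) (binTerm_le α) (i := k) ?_ summable_geom_half)
    tsum_geom_half
  rw [hk]
  norm_num

lemma binVal_shift (α : ℕ → Bool) (m : ℕ) :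
    binVal α = (∑ n ∈ Finset.range m, (if α n then (1 : ℝ) else 0) / 2 ^ (n + 1))
      + (1 / 2 ^ m) * binVal (fun n => α (n + m)) := by
  rw [binVal, ← Summable.sum_add_tsum_nat_add m (summable_binTerm α)]
  congr 1
  rw [binVal, ← tsum_mul_left]
  congr 1
  funext n
  rw [pow_add]
  by_cases h : α (n + m) <;> simp [h] <;> ring

lemma binVal_le_half (α : ℕ → Bool) (h : α 0 = false) : binVal α ≤ 1 / 2 := by
  have := binVal_shift α 1
  simp [Finset.sum_range_one, h] at this
  rw [this]
  have := binVal_le_one (fun n => α (n + 1))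
  linarith

lemma half_le_binVal (α : ℕ → Bool) (h : α 0 = true) : 1 / 2 ≤ binVal α := by
  have hs := binVal_shift α 1
  simp [Finset.sum_range_one, h] at hs
  rw [hs]
  have := binVal_nonneg (fun n => α (n + 1))
  linarith

lemma fract_pow_mul_binVal (α : ℕ → Bool) (hα : ∀ m, ∃ k, m ≤ k ∧ α k = false) (m : ℕ) :
    Int.fract ((2 : ℝ) ^ m * binVal α) = binVal (fun n => α (n + m)) := by
  set β := fun n => α (n + m) with hβ
  have key : (2 : ℝ) ^ m * binVal α =
      ((∑ n ∈ Finset.range m, (if α n then 2 ^ (m - n - 1) else 0) : ℕ) : ℝ) + binVal β := by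
    rw [binVal_shift α m]
    push_cast
    rw [mul_add, ← mul_assoc, mul_one_div, div_self (by positivity : (2:ℝ)^m ≠ 0), one_mul]
    congr 1
    rw [Finset.mul_sum]
    refine Finset.sum_congr rfl fun n hn => ?_
    have hnm : n + 1 ≤ m := Finset.mem_range.mp hn
    by_cases h : α n <;> simp [h]
    rw [inv_eq_one_div, mul_one_div, eq_comm, eq_div_iff (by positivity : ((2:ℝ)^(n+1)) ≠ 0),
      ← pow_add]
    congr 1
    omega
  rw [key]
  have h0 : 0 ≤ binVal β := binVal_nonneg β
  have h1 : binVal β < 1 := by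
    obtain ⟨k, hk, hfk⟩ := hα m
    exact binVal_lt_one β (k - m) (by simpa [hβ, Nat.sub_add_cancel hk] using hfk)
  rw [show ((∑ n ∈ Finset.range m, (if α n then 2 ^ (m - n - 1) else 0) : ℕ) : ℝ)
      = ((((∑ n ∈ Finset.range m, (if α n then 2 ^ (m - n - 1) else 0) : ℕ)) : ℤ) : ℝ) by
    push_cast; rfl]
  rw [Int.fract_intCast_add, Int.fract_eq_self.mpr ⟨h0, h1⟩]

theorem biased_along_f_not_normal
    (f : ℕ → ℕ) (hmono : StrictMono f) (h0 : f 0 = 0)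
    (α : ℕ → Bool) (hα : ∀ m, ∃ k, m ≤ k ∧ α k = false)
    (Q : ℕ → ℕ) (hQ : ∀ n, Q n = 2 ^ (f (n + 1) - f n))
    (hbias : ∃ᶠ n in Filter.atTop,
      (2 / 3 : ℝ) * n ≤ (((Finset.range n).filter (fun p => α (f p) = false)).card : ℝ) ∨
      (2 / 3 : ℝ) * n ≤ (((Finset.range n).filter (fun p => α (f p) = true)).card : ℝ)) :
    ¬ QDistNormal Q (binVal α) := by
  intro h
  -- Product of the Q's is 2^(f k)
  have hprod : ∀ k, (∏ i ∈ Finset.range k, (Q i : ℝ)) = 2 ^ (f k) := by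
    intro k
    induction k with
    | zero => simp [h0]
    | succ k ih =>
      rw [Finset.prod_range_succ, ih, hQ k]
      push_cast
      rw [← pow_add]
      congr 1
      exact Nat.add_sub_cancel' (hmono (Nat.lt_succ_self k)).le
  -- The fractional parts
  have hfract : ∀ k, Int.fract ((∏ i ∈ Finset.range k, (Q i : ℝ)) * binVal α)
      = binVal (fun n => α (n + f k)) := by
    intro k
    rw [hprod k]
    exact fract_pow_mul_binVal α hα (f k)
  -- apply normality to [0, 1/2] and [1/2, 1]
  have h1 := h 0 (1/2) le_rfl (by norm_num) (by norm_num)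
  have h2 := h (1/2) 1 (by norm_num) (by norm_num) le_rfl
  have E1 : ∀ᶠ n in Filter.atTop,
      ((((Finset.range n).filter (fun k => Int.fract
        ((∏ i ∈ Finset.range k, (Q i : ℝ)) * binVal α) ∈ Set.Icc (0:ℝ) (1/2))).card : ℝ)
        / (n : ℝ)) < 2/3 :=
    h1.eventually_lt_const (by norm_num)
  have E2 : ∀ᶠ n in Filter.atTop,
      ((((Finset.range n).filter (fun k => Int.fract
        ((∏ i ∈ Finset.range k, (Q i : ℝ)) * binVal α) ∈ Set.Icc (1/2:ℝ) 1)).card : ℝ)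
        / (n : ℝ)) < 2/3 :=
    h2.eventually_lt_const (by norm_num)
  -- subset relations
  have sub1 : ∀ n : ℕ, ((Finset.range n).filter (fun p => α (f p) = false)).card ≤
      ((Finset.range n).filter (fun k => Int.fract
        ((∏ i ∈ Finset.range k, (Q i : ℝ)) * binVal α) ∈ Set.Icc (0:ℝ) (1/2))).card := by
    intro n
    apply Finset.card_le_card
    intro k hk
    simp only [Finset.mem_filter] at hk ⊢
    refine ⟨hk.1, ?_⟩
    rw [hfract k]
    refine ⟨binVal_nonneg _, binVal_le_half _ ?_⟩
    simpa using hk.2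
  have sub2 : ∀ n : ℕ, ((Finset.range n).filter (fun p => α (f p) = true)).card ≤
      ((Finset.range n).filter (fun k => Int.fract
        ((∏ i ∈ Finset.range k, (Q i : ℝ)) * binVal α) ∈ Set.Icc (1/2:ℝ) 1)).card := by
    intro n
    apply Finset.card_le_card
    intro k hk
    simp only [Finset.mem_filter] at hk ⊢
    refine ⟨hk.1, ?_⟩
    rw [hfract k]
    refine ⟨half_le_binVal _ ?_, binVal_le_one _⟩
    simpa using hk.2
  obtain ⟨n, hn, hE1, hE2, hn1⟩ :=
    (hbias.and_eventually (E1.and (E2.and (Filter.eventually_ge_atTop 1)))).exists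
  have hnpos : (0 : ℝ) < n := by exact_mod_cast hn1
  rcases hn with hb | hb
  · have hle : (((Finset.range n).filter (fun p => α (f p) = false)).card : ℝ) ≤
        (((Finset.range n).filter (fun k => Int.fract
          ((∏ i ∈ Finset.range k, (Q i : ℝ)) * binVal α) ∈ Set.Icc (0:ℝ) (1/2))).card : ℝ) := by
      exact_mod_cast sub1 n
    rw [div_lt_iff₀ hnpos] at hE1
    linarith
  · have hle : (((Finset.range n).filter (fun p => α (f p) = true)).card : ℝ) ≤
        (((Finset.range n).filter (fun k => Int.fract
          ((∏ i ∈ Finset.range k, (Q i : ℝ)) * binVal α) ∈ Set.Icc (1/2:ℝ) 1)).card : ℝ) := by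
      exact_mod_cast sub2 n
    rw [div_lt_iff₀ hnpos] at hE2
    linarith
end

section
/- There exists a strictly increasing function f : ℕ → ℕ with f(0) = 0 which is limit computable (i.e., there is a computable g : ℕ × ℕ → ℕ with f(p) = lim_{s→∞} g(s,p) for all p), satisfies f(3^{t+1} − 1) ≤ 2·(3^{t+1} − 1) for all t, and has the property that for every total computable function α : ℕ → Bool there exist infinitely many n ∈ ℕ such that |{p < n : α(f(p)) = false}| ≥ (2/3)·n or |{p < n : α(f(p)) = true}| ≥ (2/3)·n. -/
open scoped Classical

namespace CoreCon
open Nat.Partrec Nat.Partrec.Code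

def cd (t : ℕ) : Code := Denumerable.ofNat Code (Nat.unpair t).1
def bval (s t x : ℕ) : Bool := decide ((evaln s (cd t) x).getD 0 ≠ 0)
def cnv (s t : ℕ) (I : List ℕ) : Bool :=
  decide ((I.filter fun x => (evaln s (cd t) x).isSome).length = I.length)
def Ik (t L : ℕ) : List ℕ := List.range' (L + 1) (2 * 3 ^ (t + 1) - 2 - L)
def maj (s t L : ℕ) : Bool :=
  decide (2 * 3 ^ t ≤ ((Ik t L).filter fun y => bval s (t + 1) y).length)
def pick (s t L : ℕ) : List ℕ :=
  if cnv s (t + 1) (Ik t L) then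
    ((Ik t L).filter fun x => bval s (t + 1) x == maj s t L).take (2 * 3 ^ t)
  else (Ik t L).take (2 * 3 ^ t)
def seg (s : ℕ) : ℕ → List ℕ
  | 0 => [0]
  | t + 1 => seg s t ++ pick s t ((seg s t).getD (3 ^ t - 1) 0)
def g (s p : ℕ) : ℕ := (seg s (p + 1)).getD p 0

section Prim

lemma hpow : Primrec₂ ((· ^ ·) : ℕ → ℕ → ℕ) := Primrec₂.unpaired'.1 Nat.Primrec.pow

lemma htake : Primrec₂ (fun (l : List ℕ) (n : ℕ) => l.take n) := by
  have : Primrec (fun p : List ℕ × ℕ =>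
      (List.range (min p.2 p.1.length)).map fun i => p.1.getD i 0) :=
    Primrec.list_map
      (Primrec.list_range.comp (Primrec.nat_min.comp Primrec.snd
        (Primrec.list_length.comp Primrec.fst)))
      ((Primrec.list_getD 0).comp₂ (Primrec.fst.comp Primrec.fst).to₂ Primrec₂.right)
  refine this.to₂.of_eq fun l n => ?_
  apply List.ext_getElem
  · simp
  · intro i h1 h2
    simp only [List.getElem_map, List.getElem_range, List.getElem_take]
    have hi : i < l.length := by simp [lt_min_iff] at h1 ⊢; omega
    simp [List.getD_eq_getElem?_getD, List.getElem?_eq_getElem hi]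

lemma hfilter {α : Type*} [Primcodable α] {f : α → List ℕ} {p : α → ℕ → Bool}
    (hf : Primrec f) (hp : Primrec₂ p) : Primrec fun a => (f a).filter (p a) := by
  have : Primrec fun a => (f a).filterMap (fun b => if p a b = true then some b else none) := by
    refine Primrec.listFilterMap hf ?_
    have hc : PrimrecPred fun x : α × ℕ => p x.1 x.2 = true :=
      Primrec.primrecPred (Primrec.of_eq (f := fun x : α × ℕ => p x.1 x.2) hp fun x => (Bool.decide_coe _).symm)
    exact Primrec.ite hc (Primrec.option_some.comp Primrec.snd) (Primrec.const none)
  refine this.of_eq fun a => ?_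
  induction f a with
  | nil => rfl
  | cons hd tl ih => by_cases h : p a hd <;> simp [List.filter_cons, List.filterMap_cons, h, ih]

lemma hrange' : Primrec₂ List.range' := by
  have : Primrec (fun p : ℕ × ℕ => (List.range p.2).map fun i => p.1 + i) :=
    Primrec.list_map (Primrec.list_range.comp Primrec.snd)
      (Primrec.nat_add.comp₂ (Primrec.fst.comp Primrec.fst).to₂ Primrec₂.right)
  refine this.to₂.of_eq fun a n => ?_
  rw [List.range'_eq_map_range]

lemma hcd : Primrec cd := (Primrec.ofNat Code).comp (Primrec.fst.comp Primrec.unpair)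

lemma hevaln : Primrec (fun x : (ℕ × ℕ) × ℕ => evaln x.1.1 (cd x.1.2) x.2) :=
  primrec_evaln.comp <| ((Primrec.fst.comp Primrec.fst).pair
    (hcd.comp (Primrec.snd.comp Primrec.fst))).pair Primrec.snd

lemma hbval : Primrec (fun x : (ℕ × ℕ) × ℕ => bval x.1.1 x.1.2 x.2) := by
  unfold bval
  have h1 : Primrec (fun x : (ℕ × ℕ) × ℕ => (evaln x.1.1 (cd x.1.2) x.2).getD 0) :=
    Primrec.option_getD.comp hevaln (Primrec.const 0)
  exact (PrimrecPred.not (Primrec.eq.comp h1 (Primrec.const 0))).decide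

open Primrec

lemma hcnv : Primrec (fun x : (ℕ × ℕ) × List ℕ => cnv x.1.1 x.1.2 x.2) := by
  unfold cnv
  have hfil : Primrec fun x : (ℕ × ℕ) × List ℕ =>
      x.2.filter fun y => (evaln x.1.1 (cd x.1.2) y).isSome :=
    hfilter Primrec.snd
      ((Primrec.option_isSome.comp
        (hevaln.comp ((Primrec.fst.comp Primrec.fst).pair Primrec.snd))).to₂)
  exact (Primrec.eq.comp (Primrec.list_length.comp hfil) (Primrec.list_length.comp Primrec.snd)).decide

lemma hpick : Primrec (fun x : ℕ × ℕ × ℕ => pick x.1 x.2.1 x.2.2) := by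
  unfold pick maj Ik
  have hs : Primrec fun x : ℕ × ℕ × ℕ => x.1 := Primrec.fst
  have ht : Primrec fun x : ℕ × ℕ × ℕ => x.2.1 := Primrec.fst.comp Primrec.snd
  have hL : Primrec fun x : ℕ × ℕ × ℕ => x.2.2 := Primrec.snd.comp Primrec.snd
  have hM : Primrec fun x : ℕ × ℕ × ℕ => 2 * 3 ^ x.2.1 :=
    Primrec.nat_mul.comp (Primrec.const 2) (hpow.comp (Primrec.const 3) ht)
  have hI : Primrec fun x : ℕ × ℕ × ℕ => List.range' (x.2.2 + 1) (2 * 3 ^ (x.2.1 + 1) - 2 - x.2.2) :=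
    hrange'.comp (Primrec.succ.comp hL)
      (Primrec.nat_sub.comp
        (Primrec.nat_sub.comp
          (Primrec.nat_mul.comp (Primrec.const 2)
            (hpow.comp (Primrec.const 3) (Primrec.succ.comp ht)))
          (Primrec.const 2)) hL)
  have hbv : Primrec₂ fun (x : ℕ × ℕ × ℕ) (y : ℕ) => bval x.1 (x.2.1 + 1) y :=
    (hbval.comp ((((hs.comp Primrec.fst).pair (Primrec.succ.comp (ht.comp Primrec.fst)))).pair
      Primrec.snd)).to₂
  have hT : Primrec fun x : ℕ × ℕ × ℕ =>
      ((List.range' (x.2.2 + 1) (2 * 3 ^ (x.2.1 + 1) - 2 - x.2.2)).filter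
        fun y => bval x.1 (x.2.1 + 1) y).length :=
    Primrec.list_length.comp (hfilter hI hbv)
  have hmaj : Primrec fun x : ℕ × ℕ × ℕ =>
      decide (2 * 3 ^ x.2.1 ≤
        ((List.range' (x.2.2 + 1) (2 * 3 ^ (x.2.1 + 1) - 2 - x.2.2)).filter
          fun y => bval x.1 (x.2.1 + 1) y).length) :=
    (Primrec.nat_le.comp hM hT).decide
  have hpred : Primrec₂ fun (x : ℕ × ℕ × ℕ) (y : ℕ) =>
      (bval x.1 (x.2.1 + 1) y ==
        decide (2 * 3 ^ x.2.1 ≤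
          ((List.range' (x.2.2 + 1) (2 * 3 ^ (x.2.1 + 1) - 2 - x.2.2)).filter
            fun y => bval x.1 (x.2.1 + 1) y).length)) :=
    (Primrec.beq.comp hbv (hmaj.comp Primrec.fst)).to₂
  have hA : Primrec fun x : ℕ × ℕ × ℕ =>
      (((List.range' (x.2.2 + 1) (2 * 3 ^ (x.2.1 + 1) - 2 - x.2.2)).filter
        fun y => bval x.1 (x.2.1 + 1) y ==
          decide (2 * 3 ^ x.2.1 ≤
            ((List.range' (x.2.2 + 1) (2 * 3 ^ (x.2.1 + 1) - 2 - x.2.2)).filter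
              fun y => bval x.1 (x.2.1 + 1) y).length)).take (2 * 3 ^ x.2.1)) :=
    htake.comp (hfilter hI hpred) hM
  have hB : Primrec fun x : ℕ × ℕ × ℕ =>
      (List.range' (x.2.2 + 1) (2 * 3 ^ (x.2.1 + 1) - 2 - x.2.2)).take (2 * 3 ^ x.2.1) :=
    htake.comp hI hM
  have hc : PrimrecPred fun x : ℕ × ℕ × ℕ =>
      cnv x.1 (x.2.1 + 1) (List.range' (x.2.2 + 1) (2 * 3 ^ (x.2.1 + 1) - 2 - x.2.2)) = true :=
    Primrec.primrecPred (Primrec.of_eq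
      (hcnv.comp ((hs.pair (Primrec.succ.comp ht)).pair hI))
      (fun x => (Bool.decide_coe _).symm))
  exact Primrec.ite hc hA hB

lemma hseg : Primrec₂ seg := by
  have hstep : Primrec₂ fun (a : ℕ × ℕ) (y : ℕ × List ℕ) =>
      y.2 ++ pick a.1 y.1 (y.2.getD (3 ^ y.1 - 1) 0) :=
    (Primrec.list_append.comp (Primrec.snd.comp Primrec.snd)
      (hpick.comp ((Primrec.fst.comp Primrec.fst).pair
        ((Primrec.fst.comp Primrec.snd).pair
          ((Primrec.list_getD 0).comp (Primrec.snd.comp Primrec.snd)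
            (Primrec.nat_sub.comp
              (hpow.comp (Primrec.const 3) (Primrec.fst.comp Primrec.snd))
              (Primrec.const 1))))))).to₂
  have := Primrec.nat_rec' (f := fun a : ℕ × ℕ => a.2) (g := fun _ => ([0] : List ℕ))
    (h := fun (a : ℕ × ℕ) (y : ℕ × List ℕ) => y.2 ++ pick a.1 y.1 (y.2.getD (3 ^ y.1 - 1) 0))
    Primrec.snd (Primrec.const [0]) hstep
  refine this.to₂.of_eq fun s t => ?_
  induction t with
  | zero => rfl
  | succ t ih => simp only [seg, ← ih]

lemma hg : Computable₂ g :=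
  ((Primrec.list_getD 0).comp (hseg.comp Primrec.fst (Primrec.succ.comp Primrec.snd))
    Primrec.snd).to₂.to_comp


end Prim

/-! ### basic properties -/

lemma pow3_pos (t : ℕ) : 1 ≤ 3 ^ t := Nat.one_le_pow _ _ (by norm_num)
lemma pow3_succ (t : ℕ) : 3 ^ (t + 1) = 3 * 3 ^ t := by rw [pow_succ]; ring

lemma Ik_length (t L : ℕ) : (Ik t L).length = 2 * 3 ^ (t + 1) - 2 - L := by
  simp [Ik]

lemma mem_Ik {t L x : ℕ} (hL : L ≤ 2 * 3 ^ t - 2) :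
    x ∈ Ik t L ↔ L < x ∧ x ≤ 2 * 3 ^ (t + 1) - 2 := by
  have h1 := pow3_pos t
  have h3 := pow3_succ t
  rw [Ik, List.mem_range'_1]
  omega

lemma Ik_len_ge {t L : ℕ} (hL : L ≤ 2 * 3 ^ t - 2) : 4 * 3 ^ t ≤ (Ik t L).length := by
  have h1 := pow3_pos t
  have h3 := pow3_succ t
  rw [Ik_length]
  omega

lemma filter_maj_len {s t L : ℕ} (hL : L ≤ 2 * 3 ^ t - 2) :
    2 * 3 ^ t ≤ ((Ik t L).filter fun x => bval s (t + 1) x == maj s t L).length := by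
  have hlen := Ik_len_ge hL
  have hsplit := (Ik t L).length_eq_length_filter_add fun y => bval s (t + 1) y
  by_cases hmaj : 2 * 3 ^ t ≤ ((Ik t L).filter fun y => bval s (t + 1) y).length
  · have hmt : maj s t L = true := decide_eq_true hmaj
    rw [hmt]
    have heq : ((Ik t L).filter fun x => bval s (t + 1) x == true)
        = (Ik t L).filter fun y => bval s (t + 1) y :=
      List.filter_congr fun x _ => by simp
    rw [heq]
    exact hmaj
  · have hmf : maj s t L = false := by
      unfold maj
      simpa using hmaj
    rw [hmf]
    have heq : ((Ik t L).filter fun x => bval s (t + 1) x == false)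
        = (Ik t L).filter fun y => !(bval s (t + 1) y) :=
      List.filter_congr fun x _ => by cases bval s (t + 1) x <;> simp
    rw [heq]
    omega

lemma pick_sublist (s t L : ℕ) : List.Sublist (pick s t L) (Ik t L) := by
  unfold pick
  split
  · exact (List.take_sublist _ _).trans List.filter_sublist
  · exact List.take_sublist _ _

lemma pick_sorted (s t L : ℕ) : (pick s t L).Pairwise (· < ·) :=
  List.Pairwise.sublist (pick_sublist s t L) List.pairwise_lt_range'

lemma pick_mem {s t L x : ℕ} (hL : L ≤ 2 * 3 ^ t - 2) (hx : x ∈ pick s t L) :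
    L < x ∧ x ≤ 2 * 3 ^ (t + 1) - 2 :=
  (mem_Ik hL).1 ((pick_sublist s t L).subset hx)

lemma pick_length {s t L : ℕ} (hL : L ≤ 2 * 3 ^ t - 2) :
    (pick s t L).length = 2 * 3 ^ t := by
  have hlen := Ik_len_ge hL
  have hmaj := filter_maj_len (s := s) hL
  unfold pick
  split
  · rw [List.length_take]
    omega
  · rw [List.length_take]
    omega

lemma seg_inv (s t : ℕ) :
    (seg s t).length = 3 ^ t ∧ (seg s t).Pairwise (· < ·) ∧
      (∀ x ∈ seg s t, x ≤ 2 * 3 ^ t - 2) ∧ (seg s t).getD 0 0 = 0 := by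
  induction t with
  | zero =>
      refine ⟨rfl, List.pairwise_singleton _ _, ?_, rfl⟩
      intro x hx
      simp only [seg, List.mem_singleton] at hx
      omega
  | succ t ih =>
      obtain ⟨hlen, hsort, hbd, hhead⟩ := ih
      set l := seg s t with hl
      set L := l.getD (3 ^ t - 1) 0 with hLdef
      have h1 := pow3_pos t
      have hidx : 3 ^ t - 1 < l.length := by omega
      have hLmem : L ∈ l := by
        rw [hLdef, List.getD_eq_getElem _ _ hidx]
        exact List.getElem_mem _
      have hL : L ≤ 2 * 3 ^ t - 2 := hbd L hLmem
      have hmax : ∀ x ∈ l, x ≤ L := by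
        intro x hx
        obtain ⟨i, hi, rfl⟩ := List.mem_iff_getElem.1 hx
        rcases Nat.lt_or_ge i (3 ^ t - 1) with h | h
        · have := List.pairwise_iff_getElem.1 hsort i (3 ^ t - 1) hi hidx h
          rw [hLdef, List.getD_eq_getElem _ _ hidx]
          exact this.le
        · have : i = 3 ^ t - 1 := by omega
          subst this
          rw [hLdef, List.getD_eq_getElem _ _ hidx]
      have hplen : (pick s t L).length = 2 * 3 ^ t := pick_length hL
      have h3 := pow3_succ t
      refine ⟨?_, ?_, ?_, ?_⟩
      · show (l ++ pick s t L).length = 3 ^ (t + 1)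
        rw [List.length_append, hlen, hplen]; omega
      · show (l ++ pick s t L).Pairwise (· < ·)
        rw [List.pairwise_append]
        exact ⟨hsort, pick_sorted s t L, fun x hx y hy =>
          lt_of_le_of_lt (hmax x hx) (pick_mem hL hy).1⟩
      · show ∀ x ∈ l ++ pick s t L, x ≤ 2 * 3 ^ (t + 1) - 2
        intro x hx
        rcases List.mem_append.1 hx with h | h
        · have := hbd x h; omega
        · exact (pick_mem hL h).2
      · show (l ++ pick s t L).getD 0 0 = 0
        rw [List.getD_append _ _ _ _ (by omega)]
        exact hhead

/-! ### stabilization -/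

lemma evaln_stab {s s' : ℕ} {c : Code} {x : ℕ} (h : s ≤ s')
    (hs : (evaln s c x).isSome) : evaln s' c x = evaln s c x := by
  obtain ⟨v, hv⟩ := Option.isSome_iff_exists.1 hs
  have : v ∈ evaln s c x := hv
  have := evaln_mono h this
  rw [hv]; exact this

lemma cnv_true_iff {s t : ℕ} {I : List ℕ} :
    cnv s t I = true ↔ ∀ x ∈ I, (evaln s (cd t) x).isSome := by
  rw [cnv, decide_eq_true_iff, List.length_filter_eq_length_iff]

lemma pick_stab (t L : ℕ) : ∃ N, ∀ s, N ≤ s → pick s t L = pick N t L := by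
  by_cases h : ∃ s₀, cnv s₀ (t + 1) (Ik t L) = true
  · obtain ⟨N, hN⟩ := h
    refine ⟨N, fun s hs => ?_⟩
    have hsome := cnv_true_iff.1 hN
    have heq : ∀ x ∈ Ik t L, evaln s (cd (t + 1)) x = evaln N (cd (t + 1)) x :=
      fun x hx => evaln_stab hs (hsome x hx)
    have hcs : cnv s (t + 1) (Ik t L) = true :=
      cnv_true_iff.2 fun x hx => by rw [heq x hx]; exact hsome x hx
    have hbv : ∀ x ∈ Ik t L, bval s (t + 1) x = bval N (t + 1) x := by
      intro x hx
      unfold bval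
      rw [heq x hx]
    have hfil : ((Ik t L).filter fun y => bval s (t + 1) y)
        = (Ik t L).filter fun y => bval N (t + 1) y := List.filter_congr hbv
    have hmaj : maj s t L = maj N t L := by unfold maj; rw [hfil]
    unfold pick
    rw [hcs, hN, if_pos rfl, if_pos rfl]
    congr 1
    refine List.filter_congr fun x hx => ?_
    rw [hbv x hx, hmaj]
  · have hall : ∀ s, cnv s (t + 1) (Ik t L) = false := by
      intro s
      cases hc : cnv s (t + 1) (Ik t L)
      · rfl
      · exact absurd ⟨s, hc⟩ h
    exact ⟨0, fun s _ => by unfold pick; rw [hall s, hall 0]; simp⟩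

lemma seg_stab (t : ℕ) : ∃ N, ∀ s, N ≤ s → seg s t = seg N t := by
  induction t with
  | zero => exact ⟨0, fun s _ => rfl⟩
  | succ t ih =>
      obtain ⟨N₁, h₁⟩ := ih
      obtain ⟨N₂, h₂⟩ := pick_stab t ((seg N₁ t).getD (3 ^ t - 1) 0)
      refine ⟨max N₁ N₂, fun s hs => ?_⟩
      have hs1 : N₁ ≤ s := le_trans (le_max_left _ _) hs
      have hs2 : N₂ ≤ s := le_trans (le_max_right _ _) hs
      show seg s t ++ pick s t ((seg s t).getD (3 ^ t - 1) 0)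
          = seg (max N₁ N₂) t ++ pick (max N₁ N₂) t ((seg (max N₁ N₂) t).getD (3 ^ t - 1) 0)
      rw [h₁ s hs1, h₁ (max N₁ N₂) (le_max_left _ _), h₂ s hs2, h₂ (max N₁ N₂) (le_max_right _ _)]

noncomputable def stabN (t : ℕ) : ℕ := (seg_stab t).choose
noncomputable def fseg (t : ℕ) : List ℕ := seg (stabN t) t
noncomputable def f (p : ℕ) : ℕ := (fseg (p + 1)).getD p 0

lemma seg_eq_fseg {t s : ℕ} (h : stabN t ≤ s) : seg s t = fseg t :=
  (seg_stab t).choose_spec s h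

lemma seg_prefix (s : ℕ) {t u : ℕ} (h : t ≤ u) : seg s t <+: seg s u := by
  obtain ⟨k, rfl⟩ := Nat.exists_eq_add_of_le h
  clear h
  induction k with
  | zero => exact List.prefix_rfl
  | succ k ih =>
      have : seg s (t + (k + 1)) = seg s (t + k) ++ pick s (t + k)
          ((seg s (t + k)).getD (3 ^ (t + k) - 1) 0) := rfl
      rw [this]
      exact ih.trans (List.prefix_append _ _)

lemma fseg_prefix {t u : ℕ} (h : t ≤ u) : fseg t <+: fseg u := by
  rw [← seg_eq_fseg (le_max_left (stabN t) (stabN u)),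
    ← seg_eq_fseg (le_max_right (stabN t) (stabN u))]
  exact seg_prefix _ h

lemma fseg_length (t : ℕ) : (fseg t).length = 3 ^ t := (seg_inv _ t).1

lemma getD_of_prefix {l₁ l₂ : List ℕ} {n d : ℕ} (h : l₁ <+: l₂) (hn : n < l₁.length) :
    l₁.getD n d = l₂.getD n d := by
  obtain ⟨r, rfl⟩ := h
  exact (List.getD_append _ _ _ _ hn).symm

lemma f_eq {p t : ℕ} (h : p < 3 ^ t) : f p = (fseg t).getD p 0 := by
  have hp : p < 3 ^ (p + 1) :=
    lt_trans (Nat.lt_pow_self (n := p) (by norm_num : 1 < 3)) (Nat.pow_lt_pow_succ (by norm_num))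
  rcases le_total (p + 1) t with hle | hle
  · exact getD_of_prefix (fseg_prefix hle) (by rw [fseg_length]; exact hp)
  · exact (getD_of_prefix (fseg_prefix hle) (by rw [fseg_length]; exact h)).symm


lemma f_strictMono : StrictMono f := by
  intro p q hpq
  have hq : q < 3 ^ (q + 1) :=
    lt_trans (Nat.lt_pow_self (n := q) (by norm_num : 1 < 3)) (Nat.pow_lt_pow_succ (by norm_num))
  have hp : p < 3 ^ (q + 1) := lt_trans hpq hq
  rw [f_eq hp, f_eq hq]
  have hsort := (seg_inv (stabN (q + 1)) (q + 1)).2.1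
  have hlen := fseg_length (q + 1)
  rw [List.getD_eq_getElem _ _ (by omega), List.getD_eq_getElem _ _ (by omega)]
  exact List.pairwise_iff_getElem.1 hsort _ _ _ _ hpq

lemma f_zero : f 0 = 0 := by
  have h := (seg_inv (stabN 1) 1).2.2.2
  have h2 : f 0 = (fseg 1).getD 0 0 := f_eq (by norm_num)
  rw [h2]
  exact h

lemma f_bound (t : ℕ) : f (3 ^ (t + 1) - 1) ≤ 2 * (3 ^ (t + 1) - 1) := by
  have h1 := pow3_pos (t + 1)
  have hlt : 3 ^ (t + 1) - 1 < 3 ^ (t + 1) := by omega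
  rw [f_eq hlt]
  have hlen := fseg_length (t + 1)
  have hmem : (fseg (t + 1)).getD (3 ^ (t + 1) - 1) 0 ∈ fseg (t + 1) := by
    rw [List.getD_eq_getElem _ _ (by omega)]
    exact List.getElem_mem _
  have := (seg_inv (stabN (t + 1)) (t + 1)).2.2.1 _ hmem
  omega

lemma g_lim (p : ℕ) : ∀ s, stabN (p + 1) ≤ s → g s p = f p := fun s hs => by
  unfold g f
  rw [seg_eq_fseg hs]

lemma exists_code_bool {α : ℕ → Bool} (h : Computable α) :
    ∃ c : Code, ∀ x, eval c x = Part.some (Encodable.encode (α x)) := by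
  obtain ⟨c, hc⟩ := exists_code.1 h
  refine ⟨c, fun x => ?_⟩
  rw [hc]
  simp

lemma evaln_all {c : Code} {α : ℕ → Bool}
    (hc : ∀ x, eval c x = Part.some (Encodable.encode (α x))) (I : List ℕ) :
    ∃ k, ∀ x ∈ I, (evaln k c x).isSome := by
  induction I with
  | nil => exact ⟨0, by simp⟩
  | cons a l ih =>
      obtain ⟨k₁, hk₁⟩ := ih
      have hmem : Encodable.encode (α a) ∈ eval c a := by
        rw [hc a]; exact Part.mem_some _
      obtain ⟨k₂, hk₂⟩ := evaln_complete.1 hmem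
      refine ⟨max k₂ k₁, fun x hx => ?_⟩
      rcases List.mem_cons.1 hx with rfl | hx
      · exact Option.isSome_iff_exists.2 ⟨_, evaln_mono (le_max_left _ _) hk₂⟩
      · obtain ⟨v, hv⟩ := Option.isSome_iff_exists.1 (hk₁ x hx)
        exact Option.isSome_iff_exists.2 ⟨v, evaln_mono (le_max_right _ _) hv⟩

lemma block (c : Code) {α : ℕ → Bool}
    (hc : ∀ x, eval c x = Part.some (Encodable.encode (α x)))
    {t : ℕ} (ht : cd (t + 1) = c) :
    ∃ b : Bool, ∀ p, 3 ^ t ≤ p → p < 3 ^ (t + 1) → α (f p) = b := by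
  set L := (fseg t).getD (3 ^ t - 1) 0 with hLdef
  have h1 := pow3_pos t
  have hflen := fseg_length t
  have hLmem : L ∈ fseg t := by
    rw [hLdef, List.getD_eq_getElem _ _ (by omega)]
    exact List.getElem_mem _
  have hL : L ≤ 2 * 3 ^ t - 2 := (seg_inv (stabN t) t).2.2.1 _ hLmem
  obtain ⟨k, hk⟩ := evaln_all hc (Ik t L)
  set s := max k (max (stabN t) (stabN (t + 1))) with hsdef
  have hsk : k ≤ s := le_max_left _ _
  have hst : stabN t ≤ s := le_trans (le_max_left _ _) (le_max_right _ _)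
  have hst1 : stabN (t + 1) ≤ s := le_trans (le_max_right _ _) (le_max_right _ _)
  have hseg2 : fseg (t + 1) = fseg t ++ pick s t L := by
    rw [← seg_eq_fseg hst1]
    show seg s t ++ pick s t ((seg s t).getD (3 ^ t - 1) 0) = _
    rw [seg_eq_fseg hst]
  have hsome : ∀ x ∈ Ik t L, (evaln s (cd (t + 1)) x).isSome := by
    intro x hx
    rw [ht, evaln_stab hsk (hk x hx)]
    exact hk x hx
  have hcnv : cnv s (t + 1) (Ik t L) = true := cnv_true_iff.2 hsome
  have hbv : ∀ x ∈ Ik t L, bval s (t + 1) x = α x := by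
    intro x hx
    obtain ⟨v, hv⟩ := Option.isSome_iff_exists.1 (hsome x hx)
    have hvx : v ∈ eval c x := evaln_sound (ht ▸ hv)
    rw [hc x, Part.mem_some_iff] at hvx
    subst hvx
    unfold bval
    rw [hv]
    cases hax : α x <;> simp [hax, Encodable.encode] <;> decide
  refine ⟨maj s t L, fun p hp1 hp2 => ?_⟩
  have hplen : (pick s t L).length = 2 * 3 ^ t := pick_length hL
  have h3 := pow3_succ t
  have hidx : p - 3 ^ t < (pick s t L).length := by omega
  have hfp : f p = (pick s t L)[p - 3 ^ t] := by
    rw [f_eq hp2, hseg2, List.getD_append_right _ _ _ _ (by omega), hflen,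
      List.getD_eq_getElem _ _ hidx]
  have hmem : (pick s t L)[p - 3 ^ t] ∈ pick s t L := List.getElem_mem _
  have hpick_eq : pick s t L
      = ((Ik t L).filter fun x => bval s (t + 1) x == maj s t L).take (2 * 3 ^ t) := by
    unfold pick
    rw [hcnv]
    simp
  have hall : ∀ x ∈ pick s t L, α x = maj s t L := by
    intro x hx
    rw [hpick_eq] at hx
    have hxf := List.mem_of_mem_take hx
    have hprop := List.of_mem_filter hxf
    have hxI : x ∈ Ik t L := List.mem_of_mem_filter hxf
    rw [← hbv x hxI]
    exact eq_of_beq hprop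
  rw [hfp]
  exact hall _ hmem

end CoreCon


theorem core_construction :
    ∃ f : ℕ → ℕ,
      StrictMono f ∧ f 0 = 0 ∧
      (∃ g : ℕ → ℕ → ℕ, Computable₂ g ∧ ∀ p, ∃ N, ∀ s, N ≤ s → g s p = f p) ∧
      (∀ t : ℕ, f (3 ^ (t + 1) - 1) ≤ 2 * (3 ^ (t + 1) - 1)) ∧
      (∀ α : ℕ → Bool, Computable α →
        ∃ᶠ n in Filter.atTop,
          (2 / 3 : ℝ) * n ≤
            (((Finset.range n).filter (fun p => α (f p) = false)).card : ℝ) ∨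
          (2 / 3 : ℝ) * n ≤
            (((Finset.range n).filter (fun p => α (f p) = true)).card : ℝ)) := by
  refine ⟨CoreCon.f, CoreCon.f_strictMono, CoreCon.f_zero,
    ⟨CoreCon.g, CoreCon.hg, fun p => ⟨CoreCon.stabN (p + 1), CoreCon.g_lim p⟩⟩,
    CoreCon.f_bound, ?_⟩
  intro α hα
  obtain ⟨c, hc⟩ := CoreCon.exists_code_bool hα
  rw [Filter.frequently_atTop]
  intro N₀
  set j := Nat.pair (Encodable.encode c) (N₀ + 1) with hj
  have hj1 : N₀ + 1 ≤ j := Nat.right_le_pair _ _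
  set t := j - 1 with htdef
  have htj : t + 1 = j := by omega
  have hcd : CoreCon.cd (t + 1) = c := by
    rw [CoreCon.cd, htj, hj, Nat.unpair_pair]
    exact Denumerable.ofNat_encode c
  obtain ⟨b, hb⟩ := CoreCon.block c hc hcd
  refine ⟨3 ^ (t + 1), ?_, ?_⟩
  · have h2 : t + 1 < 3 ^ (t + 1) := Nat.lt_pow_self (by norm_num)
    omega
  · have hsub : Finset.Ico (3 ^ t) (3 ^ (t + 1)) ⊆
        (Finset.range (3 ^ (t + 1))).filter fun p => α (CoreCon.f p) = b := by
      intro p hp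
      rw [Finset.mem_Ico] at hp
      rw [Finset.mem_filter, Finset.mem_range]
      exact ⟨hp.2, hb p hp.1 hp.2⟩
    have hcard : 2 * 3 ^ t ≤
        ((Finset.range (3 ^ (t + 1))).filter fun p => α (CoreCon.f p) = b).card := by
      have hcc := Finset.card_le_card hsub
      rw [Nat.card_Ico] at hcc
      have h3 := CoreCon.pow3_succ t
      omega
    have hreal : (2 / 3 : ℝ) * ((3 ^ (t + 1) : ℕ) : ℝ) = ((2 * 3 ^ t : ℕ) : ℝ) := by
      push_cast
      rw [pow_succ]
      ring
    cases b
    · left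
      rw [hreal]
      exact_mod_cast hcard
    · right
      rw [hreal]
      exact_mod_cast hcard
end

section
/- There exists a strictly increasing limit computable function f : ℕ → ℕ with f(0) = 0 such that, setting q_n = 2^{f(n+1) − f(n)} and Q = (q_n)_{n∈ℕ}, for every total computable function α : ℕ → Bool that does not end in an infinite string of 1's, the sequence a_n = |{p ≤ n : frac(q_0 · q_1 · … · q_{p−1} · x_α) ∈ [0, 1/2]}| / n does not converge to 1/2 as n → ∞ (either the limit fails to exist or it differs from 1/2), where x_α = Σ_{n∈ℕ} α(n)·2^{−(n+1)}. -/
open scoped Classical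

namespace FreqProof


lemma summable_binVal (α : ℕ → Bool) :
    Summable (fun n => (if α n then (1 : ℝ) else 0) / 2 ^ (n + 1)) := by
  apply Summable.of_nonneg_of_le (fun n => by positivity)
    (fun n => ?_) (summable_geometric_two' 1)
  · calc (if α n then (1:ℝ) else 0) / 2 ^ (n+1) ≤ 1 / 2 ^ (n+1) := by
          gcongr; split <;> norm_num
      _ = 1 / 2 / 2 ^ n := by ring

lemma binVal_nonneg (α : ℕ → Bool) : 0 ≤ binVal α :=
  tsum_nonneg fun n => by positivity

lemma binVal_le_one (α : ℕ → Bool) : binVal α ≤ 1 := by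
  have h1 : binVal α ≤ ∑' n : ℕ, (1:ℝ) / 2 / 2 ^ n := by
    apply Summable.tsum_le_tsum _ (summable_binVal α) (summable_geometric_two' 1)
    intro n
    calc (if α n then (1:ℝ) else 0) / 2 ^ (n+1) ≤ 1 / 2 ^ (n+1) := by
          gcongr; split <;> norm_num
      _ = 1 / 2 / 2 ^ n := by ring
  exact h1.trans_eq (tsum_geometric_two' 1)

lemma binVal_rec (α : ℕ → Bool) :
    binVal α = (if α 0 then (1:ℝ) else 0) / 2 + binVal (fun n => α (n + 1)) / 2 := by
  have h := Summable.tsum_eq_zero_add (summable_binVal α)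
  rw [binVal, h]
  congr 1
  · norm_num
  · rw [binVal, ← tsum_div_const]
    congr 1; funext n; ring

lemma binVal_lt_one : ∀ (j : ℕ) (α : ℕ → Bool), α j = false → binVal α < 1 := by
  intro j
  induction j with
  | zero =>
    intro α h
    rw [binVal_rec, h]
    have := binVal_le_one (fun n => α (n + 1))
    norm_num
    linarith
  | succ j ih =>
    intro α h
    rw [binVal_rec]
    have h1 : binVal (fun n => α (n + 1)) < 1 := ih _ h
    have h2 : (if α 0 then (1:ℝ) else 0) ≤ 1 := by split <;> norm_num
    linarith

lemma binVal_le_half (α : ℕ → Bool) (h : α 0 = false) : binVal α ≤ 1 / 2 := by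
  rw [binVal_rec, h]
  have := binVal_le_one (fun n => α (n + 1))
  norm_num
  linarith

lemma fract_pow_binVal (α : ℕ → Bool) (h : ∀ m, ∃ k, m ≤ k ∧ α k = false) (m : ℕ) :
    Int.fract ((2:ℝ) ^ m * binVal α) = binVal (fun k => α (m + k)) := by
  induction m with
  | zero =>
    simp only [pow_zero, one_mul, Nat.zero_add]
    obtain ⟨k, -, hk⟩ := h 0
    rw [Int.fract_eq_self.2 ⟨binVal_nonneg α, binVal_lt_one k α hk⟩]
  | succ m ih =>
    have key : (2:ℝ) ^ (m+1) * binVal α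
        = 2 * (⌊(2:ℝ)^m * binVal α⌋ : ℤ) + 2 * Int.fract ((2:ℝ)^m * binVal α) := by
      rw [Int.fract]; ring
    rw [key, ih]
    have h2 : (2:ℝ) * binVal (fun k => α (m + k))
        = (if α (m + 0) then (1:ℝ) else 0) + binVal (fun k => α (m + (k + 1))) := by
      rw [binVal_rec (fun k => α (m + k))]; ring
    have htail : (fun k => α (m + (k + 1))) = (fun k => α (m + 1 + k)) := by
      funext k; congr 1; omega
    have hfr : Int.fract (binVal (fun k => α (m + 1 + k))) = binVal (fun k => α (m + 1 + k)) := by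
      obtain ⟨k, hk1, hk2⟩ := h (m + 1)
      refine Int.fract_eq_self.2 ⟨binVal_nonneg _, binVal_lt_one (k - (m+1)) _ ?_⟩
      have : m + 1 + (k - (m + 1)) = k := by omega
      rw [this]; exact hk2
    have : ((2 : ℤ) * ⌊(2:ℝ)^m * binVal α⌋ : ℝ) = ((2 * ⌊(2:ℝ)^m * binVal α⌋ : ℤ) : ℝ) := by
      push_cast; ring
    rw [show (2:ℝ) * (⌊(2:ℝ)^m * binVal α⌋ : ℤ) + 2 * binVal (fun k => α (m + k))
        = ((2 * ⌊(2:ℝ)^m * binVal α⌋ : ℤ) : ℝ) + (2 * binVal (fun k => α (m + k))) by push_cast; ring,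
      Int.fract_intCast_add, h2, htail]
    split
    · rw [show ((1:ℝ) + binVal (fun k => α (m+1+k)))
          = ((1:ℤ):ℝ) + binVal (fun k => α (m+1+k)) by push_cast; ring, Int.fract_intCast_add, hfr]
    · rw [zero_add, hfr]

lemma fract_mem_Icc (α : ℕ → Bool) (h : ∀ m, ∃ k, m ≤ k ∧ α k = false) (m : ℕ)
    (hm : α m = false) :
    Int.fract ((2:ℝ) ^ m * binVal α) ∈ Set.Icc (0:ℝ) (1/2) := by
  rw [fract_pow_binVal α h m]
  exact ⟨binVal_nonneg _, binVal_le_half _ (by simpa using hm)⟩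

lemma prod_pow_eq (f : ℕ → ℕ) (hf : Monotone f) (h0 : f 0 = 0) (p : ℕ) :
    (∏ i ∈ Finset.range p, ((2:ℝ) ^ (f (i+1) - f i))) = 2 ^ (f p) := by
  induction p with
  | zero => simp [h0]
  | succ p ih =>
    rw [Finset.prod_range_succ, ih, ← pow_add]
    congr 1
    have := hf (Nat.le_succ p)
    simp only [Nat.succ_eq_add_one] at *
    omega



open Nat.Partrec Nat.Partrec.Code List

/-- take via range/filterMap, for primrec-friendliness -/
def myTake (k : ℕ) (l : List ℕ) : List ℕ :=
  (List.range k).filterMap (fun i => l[i]?)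

lemma myTake_eq (k : ℕ) (l : List ℕ) : myTake k l = l.take k := by
  induction k with
  | zero => simp [myTake]
  | succ k ih =>
    rw [myTake, List.range_succ, List.filterMap_append, List.take_succ, ← myTake, ih]
    cases h : l[k]? <;> simp [h]

/-- candidates: m ≤ s with c < m and the e-th machine outputs 0 on m within s steps -/
def cands (s e c : ℕ) : List ℕ :=
  (List.range (s+1)).filterMap
    (Option.guard fun m => c < m ∧ evaln s (Denumerable.ofNat Code e) m = some 0)

def blocks (s e c k : ℕ) : List (List ℕ) :=
  (List.range (s+1)).filterMap fun s' =>
    if k ≤ (cands s' e c).length then some (myTake k (cands s' e c)) else none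

def lst (l : List ℕ) : ℕ := l.getD (l.length - 1) 0

def step (s t : ℕ) (l : List ℕ) : List ℕ :=
  l ++ (blocks s t.unpair.1 (lst l) (2 * l.length + 2) ++ [[lst l + 1]]).getD 0 []

def run (s : ℕ) : ℕ → List ℕ
  | 0 => [0]
  | t+1 => step s t (run s t)

def g (s p : ℕ) : ℕ := (run s s).getD p 0

-- Primrec facts
lemma myTake_primrec : Primrec₂ myTake := by
  have : Primrec₂ fun (k : ℕ) (l : List ℕ) => (List.range k).filterMap (fun i => l[i]?) :=
    Primrec.to₂ (Primrec.listFilterMap (Primrec.list_range.comp Primrec.fst)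
      ((Primrec.list_getElem?).comp₂ (Primrec.snd.comp Primrec.fst).to₂ Primrec₂.right))
  exact this

lemma cands_primrec : Primrec fun x : ℕ × ℕ × ℕ => cands x.1 x.2.1 x.2.2 := by
  apply Primrec.listFilterMap (Primrec.list_range.comp (Primrec.succ.comp Primrec.fst))
  have hev : Primrec fun p : (ℕ × ℕ × ℕ) × ℕ =>
      evaln p.1.1 (Denumerable.ofNat Code p.1.2.1) p.2 :=
    primrec_evaln.comp (((Primrec.fst.comp Primrec.fst).pair
      ((Primrec.ofNat Code).comp (Primrec.fst.comp (Primrec.snd.comp Primrec.fst)))).pair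
      Primrec.snd)
  have hite : Primrec fun q : (ℕ × ℕ × ℕ) × ℕ =>
      if q.1.2.2 < q.2 ∧ evaln q.1.1 (Denumerable.ofNat Code q.1.2.1) q.2 = some 0
      then some q.2 else none :=
    Primrec.ite
      ((PrimrecRel.comp Primrec.nat_lt (Primrec.snd.comp (Primrec.snd.comp Primrec.fst))
          Primrec.snd).and
        (PrimrecRel.comp Primrec.eq hev (Primrec.const (some 0))))
      (Primrec.option_some.comp Primrec.snd) (Primrec.const none)
  refine (hite.to₂).of_eq fun a b => ?_
  simp [Option.guard]

lemma blocks_primrec : Primrec fun x : ℕ × ℕ × ℕ × ℕ => blocks x.1 x.2.1 x.2.2.1 x.2.2.2 := by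
  apply Primrec.listFilterMap (Primrec.list_range.comp (Primrec.succ.comp Primrec.fst))
  have hc : Primrec fun p : (ℕ × ℕ × ℕ × ℕ) × ℕ =>
      cands p.2 p.1.2.1 p.1.2.2.1 :=
    cands_primrec.comp (Primrec.snd.pair
      ((Primrec.fst.comp (Primrec.snd.comp Primrec.fst)).pair
       (Primrec.fst.comp (Primrec.snd.comp (Primrec.snd.comp Primrec.fst)))))
  have hk : Primrec fun p : (ℕ × ℕ × ℕ × ℕ) × ℕ => p.1.2.2.2 :=
    Primrec.snd.comp (Primrec.snd.comp (Primrec.snd.comp Primrec.fst))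
  exact (Primrec.ite (PrimrecRel.comp Primrec.nat_le hk (Primrec.list_length.comp hc))
    (Primrec.option_some.comp (myTake_primrec.comp hk hc))
    (Primrec.const none)).to₂

lemma lst_primrec : Primrec lst :=
  (Primrec.list_getD 0).comp Primrec.id (Primrec.pred.comp Primrec.list_length)

lemma step_primrec : Primrec fun x : (ℕ × ℕ) × List ℕ => step x.1.1 x.1.2 x.2 := by
  have hl : Primrec fun x : (ℕ × ℕ) × List ℕ => x.2 := Primrec.snd
  have hlst : Primrec fun x : (ℕ × ℕ) × List ℕ => lst x.2 := lst_primrec.comp hl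
  have hk : Primrec fun x : (ℕ × ℕ) × List ℕ => 2 * x.2.length + 2 :=
    Primrec.succ.comp (Primrec.succ.comp
      (Primrec.nat_double.comp (Primrec.list_length.comp hl)))
  have hbl : Primrec fun x : (ℕ × ℕ) × List ℕ =>
      blocks x.1.1 x.1.2.unpair.1 (lst x.2) (2 * x.2.length + 2) :=
    blocks_primrec.comp ((Primrec.fst.comp Primrec.fst).pair
      (((Primrec.fst.comp (Primrec.unpair.comp (Primrec.snd.comp Primrec.fst)))).pair
        (hlst.pair hk)))
  have happ : Primrec fun x : (ℕ × ℕ) × List ℕ =>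
      (blocks x.1.1 x.1.2.unpair.1 (lst x.2) (2 * x.2.length + 2) ++ [[lst x.2 + 1]]) :=
    Primrec.list_append.comp hbl
      (Primrec.list_cons.comp (Primrec.list_cons.comp (Primrec.succ.comp hlst)
        (Primrec.const [])) (Primrec.const []))
  exact Primrec.list_append.comp hl
    (((Primrec.list_getD ([] : List ℕ)).comp happ (Primrec.const 0)))

lemma run_primrec : Primrec₂ run := by
  have := Primrec.nat_rec (f := fun _ : ℕ => ([0] : List ℕ))
    (g := fun (s : ℕ) (p : ℕ × List ℕ) => step s p.1 p.2)
    (Primrec.const [0])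
    (step_primrec.comp ((Primrec.fst.pair (Primrec.fst.comp Primrec.snd)).pair
      (Primrec.snd.comp Primrec.snd))).to₂
  refine this.of_eq fun s t => ?_
  induction t with
  | zero => rfl
  | succ t ih => simp only [run, ← ih]

lemma g_primrec : Primrec₂ g := by
  have : Primrec fun p : ℕ × ℕ => (run p.1 p.1).getD p.2 0 :=
    (Primrec.list_getD 0).comp (run_primrec.comp Primrec.fst Primrec.fst) Primrec.snd
  exact this

lemma g_computable : Computable₂ g := g_primrec.to_comp


lemma mem_cands {s e c m : ℕ} :
    m ∈ cands s e c ↔ m ≤ s ∧ c < m ∧ evaln s (Denumerable.ofNat Code e) m = some 0 := by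
  simp only [cands, List.mem_filterMap, List.mem_range]
  constructor
  · rintro ⟨a, ha, hg⟩
    rw [Option.guard] at hg
    split at hg
    · cases hg; exact ⟨by omega, of_decide_eq_true (by assumption)⟩
    · cases hg
  · rintro ⟨h1, h2⟩
    refine ⟨m, by omega, ?_⟩
    rw [Option.guard, if_pos (decide_eq_true h2)]

lemma filterMap_guard_sublist {α : Type*} (p : α → Prop) [DecidablePred p] :
    ∀ l : List α, l.filterMap (Option.guard p) <+ l := by
  intro l
  induction l with
  | nil => simp
  | cons a t ih =>
    rw [List.filterMap_cons]
    by_cases hp : p a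
    · rw [Option.guard, if_pos (decide_eq_true hp)]
      exact ih.cons₂ a
    · rw [Option.guard, if_neg (by simpa using hp)]
      exact ih.cons a

lemma cands_sorted (s e c : ℕ) : (cands s e c).Pairwise (· < ·) :=
  (List.pairwise_lt_range (n := s+1)).sublist (filterMap_guard_sublist _ _)

lemma cands_nodup (s e c : ℕ) : (cands s e c).Nodup :=
  (cands_sorted s e c).imp (fun h => ne_of_lt h)

lemma cands_mono {s s' e c : ℕ} (h : s ≤ s') {m : ℕ} (hm : m ∈ cands s e c) :
    m ∈ cands s' e c := by
  rw [mem_cands] at hm ⊢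
  refine ⟨hm.1.trans h, hm.2.1, ?_⟩
  have := evaln_mono h (x := 0) (by rw [Option.mem_def]; exact hm.2.2)
  rwa [Option.mem_def] at this

lemma cands_length_mono {s s' e c : ℕ} (h : s ≤ s') :
    (cands s e c).length ≤ (cands s' e c).length := by
  rw [← List.toFinset_card_of_nodup (cands_nodup s e c),
      ← List.toFinset_card_of_nodup (cands_nodup s' e c)]
  apply Finset.card_le_card
  intro m hm
  rw [List.mem_toFinset] at hm ⊢
  exact cands_mono h hm

lemma range_prefix {m n : ℕ} (h : m ≤ n) : List.range m <+: List.range n := by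
  obtain ⟨d, rfl⟩ : ∃ d, n = m + d := ⟨n - m, by omega⟩
  rw [List.range_add]
  exact ⟨_, rfl⟩

lemma blocks_prefix {s s' e c k : ℕ} (h : s ≤ s') : blocks s e c k <+: blocks s' e c k :=
  (range_prefix (by omega : s + 1 ≤ s' + 1)).filterMap _

lemma blocks_mem {s e c k : ℕ} {b : List ℕ} (hb : b ∈ blocks s e c k) :
    ∃ s', k ≤ (cands s' e c).length ∧ b = myTake k (cands s' e c) := by
  rw [blocks, List.mem_filterMap] at hb
  obtain ⟨s', -, hg⟩ := hb
  split at hg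
  · cases hg; exact ⟨s', by assumption, rfl⟩
  · cases hg

lemma step_spec (s t : ℕ) (l : List ℕ) :
    ∃ bl : List ℕ, step s t l = l ++ bl ∧ bl ≠ [] ∧ bl.Pairwise (· < ·) ∧
      ∀ m ∈ bl, lst l < m := by
  rcases hB : blocks s t.unpair.1 (lst l) (2 * l.length + 2) with - | ⟨b, bs⟩
  · refine ⟨[lst l + 1], ?_, by simp, by simp, by simp⟩
    rw [step, hB]
    rfl
  · have hbmem : b ∈ blocks s t.unpair.1 (lst l) (2 * l.length + 2) := by
      rw [hB]; exact List.mem_cons_self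
    obtain ⟨s', hlen, hbeq⟩ := blocks_mem hbmem
    have hbsub : b <+ cands s' t.unpair.1 (lst l) := by
      rw [hbeq, myTake_eq]; exact List.take_sublist _ _
    have hblen : b.length = 2 * l.length + 2 := by
      rw [hbeq, myTake_eq, List.length_take]; omega
    refine ⟨b, ?_, ?_, ?_, ?_⟩
    · rw [step, hB]
      rfl
    · intro hnil; rw [hnil] at hblen; simp at hblen
    · exact (cands_sorted _ _ _).sublist hbsub
    · intro m hm
      have := hbsub.mem hm
      exact (mem_cands.1 this).2.1

lemma step_prefix (s t : ℕ) (l : List ℕ) : l <+: step s t l := ⟨_, rfl⟩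

lemma step_length (s t : ℕ) (l : List ℕ) : l.length + 1 ≤ (step s t l).length := by
  obtain ⟨bl, heq, hne, -, -⟩ := step_spec s t l
  rw [heq, List.length_append]
  have := List.length_pos_iff.2 hne
  omega

lemma step_stab (t : ℕ) (l : List ℕ) : ∃ S, ∀ s, S ≤ s → step s t l = step S t l := by
  by_cases hne : ∃ s₀, blocks s₀ t.unpair.1 (lst l) (2 * l.length + 2) ≠ []
  · obtain ⟨S, hS⟩ := hne
    refine ⟨S, fun s hs => ?_⟩
    obtain ⟨r, hr⟩ := blocks_prefix (s := S) (s' := s)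
      (e := t.unpair.1) (c := lst l) (k := 2 * l.length + 2) hs
    rw [step, step, ← hr]
    congr 1
    rcases hBS : blocks S t.unpair.1 (lst l) (2 * l.length + 2) with - | ⟨b, bs⟩
    · exact absurd hBS hS
    · simp
  · push_neg at hne
    refine ⟨0, fun s _ => ?_⟩
    rw [step, step, hne s, hne 0]

lemma run_stab (t : ℕ) : ∃ S, ∀ s, S ≤ s → run s t = run S t := by
  induction t with
  | zero => exact ⟨0, fun s _ => rfl⟩
  | succ t ih =>
    obtain ⟨S₁, h₁⟩ := ih
    obtain ⟨S₂, h₂⟩ := step_stab t (run S₁ t)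
    refine ⟨max S₁ S₂, fun s hs => ?_⟩
    have e1 : run s t = run S₁ t := h₁ s (le_trans (le_max_left _ _) hs)
    have e2 : run (max S₁ S₂) t = run S₁ t := h₁ _ (le_max_left _ _)
    show step s t (run s t) = step (max S₁ S₂) t (run (max S₁ S₂) t)
    rw [e1, e2, h₂ s (le_trans (le_max_right _ _) hs), h₂ _ (le_max_right _ _)]

noncomputable def stab (t : ℕ) : ℕ := Classical.choose (run_stab t)

lemma trueRun_eq' (t : ℕ) : ∀ s, stab t ≤ s → run s t = run (stab t) t :=
  Classical.choose_spec (run_stab t)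

noncomputable def trueRun (t : ℕ) : List ℕ := run (stab t) t

lemma trueRun_eq {t s : ℕ} (hs : stab t ≤ s) : run s t = trueRun t := trueRun_eq' t s hs

lemma trueRun_succ (t : ℕ) : ∃ S, ∀ s, S ≤ s → trueRun (t+1) = step s t (trueRun t) := by
  refine ⟨max (stab t) (stab (t+1)), fun s hs => ?_⟩
  have h1 : run s (t+1) = trueRun (t+1) := trueRun_eq (le_trans (le_max_right _ _) hs)
  have h2 : run s t = trueRun t := trueRun_eq (le_trans (le_max_left _ _) hs)
  rw [← h1, ← h2]; rfl

lemma trueRun_zero : trueRun 0 = [0] := rfl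

lemma run_prefix_mono (s : ℕ) {t t' : ℕ} (h : t ≤ t') : run s t <+: run s t' := by
  induction t' with
  | zero => rw [Nat.le_zero.1 h]
  | succ t' ih =>
    rcases Nat.lt_or_ge t (t'+1) with h' | h'
    · exact (ih (by omega)).trans (step_prefix s t' (run s t'))
    · have : t = t' + 1 := by omega
      rw [this]

lemma trueRun_prefix {t t' : ℕ} (h : t ≤ t') : trueRun t <+: trueRun t' := by
  induction t' with
  | zero => rw [Nat.le_zero.1 h]
  | succ t' ih =>
    rcases Nat.lt_or_ge t (t'+1) with h' | h'
    · obtain ⟨S, hS⟩ := trueRun_succ t'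
      rw [hS S le_rfl]
      exact (ih (by omega)).trans (step_prefix _ _ _)
    · have : t = t' + 1 := by omega
      rw [this]

lemma trueRun_length (t : ℕ) : t + 1 ≤ (trueRun t).length := by
  induction t with
  | zero => rw [trueRun_zero]; simp
  | succ t ih =>
    obtain ⟨S, hS⟩ := trueRun_succ t
    rw [hS S le_rfl]
    have := step_length S t (trueRun t)
    omega

lemma le_lst {l : List ℕ} (hs : l.Pairwise (· < ·)) (hne : l ≠ []) :
    ∀ x ∈ l, x ≤ lst l := by
  intro x hx
  have hlen : 0 < l.length := List.length_pos_iff.2 hne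
  obtain ⟨i, hi⟩ := List.mem_iff_get.1 hx
  have hlst : lst l = l.get ⟨l.length - 1, by omega⟩ := by
    rw [lst, List.getD_eq_getElem _ _ (by omega)]; rfl
  rw [hlst, ← hi]
  exact hs.sortedLT.strictMono_get.monotone (by
    show i.1 ≤ l.length - 1
    have := i.2; omega)

lemma trueRun_sorted (t : ℕ) : (trueRun t).Pairwise (· < ·) ∧ trueRun t ≠ [] := by
  induction t with
  | zero => rw [trueRun_zero]; exact ⟨by simp, by simp⟩
  | succ t ih =>
    obtain ⟨S, hS⟩ := trueRun_succ t
    rw [hS S le_rfl]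
    obtain ⟨bl, heq, hne, hsort, hgt⟩ := step_spec S t (trueRun t)
    rw [heq]
    constructor
    · rw [List.pairwise_append]
      refine ⟨ih.1, hsort, fun x hx y hy => ?_⟩
      exact lt_of_le_of_lt (le_lst ih.1 ih.2 x hx) (hgt y hy)
    · simp [hne, ih.2]

lemma getD_prefix {l₁ l₂ : List ℕ} (h : l₁ <+: l₂) {p : ℕ} (hp : p < l₁.length) :
    l₂.getD p 0 = l₁.getD p 0 := by
  obtain ⟨r, rfl⟩ := h
  exact List.getD_append _ _ _ _ hp

noncomputable def f (p : ℕ) : ℕ := (trueRun (p+1)).getD p 0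

lemma f_eq_getD {u p : ℕ} (h : p + 1 ≤ u) : f p = (trueRun u).getD p 0 := by
  rw [f, getD_prefix (trueRun_prefix h)]
  have := trueRun_length (p+1)
  omega

lemma f_strictMono : StrictMono f := by
  intro p q hpq
  rw [f_eq_getD (u := q+1) (by omega), f_eq_getD (u := q+1) (by omega)]
  have hlen := trueRun_length (q+1)
  have hp : p < (trueRun (q+1)).length := by omega
  have hq : q < (trueRun (q+1)).length := by omega
  rw [List.getD_eq_getElem _ _ hp, List.getD_eq_getElem _ _ hq]
  exact (trueRun_sorted (q+1)).1.sortedLT.strictMono_get (by exact hpq)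

lemma f_zero : f 0 = 0 := by
  rw [f]
  have h01 : trueRun 0 <+: trueRun 1 := trueRun_prefix (by omega)
  rw [getD_prefix h01 (by rw [trueRun_zero]; simp)]
  rfl

lemma g_lim (p : ℕ) : ∃ N, ∀ s, N ≤ s → g s p = f p := by
  refine ⟨max (stab (p+1)) (p+1), fun s hs => ?_⟩
  have h1 : run s (p+1) = trueRun (p+1) := trueRun_eq (le_trans (le_max_left _ _) hs)
  have h2 : run s (p+1) <+: run s s := run_prefix_mono s (le_trans (le_max_right _ _) hs)
  have h3 : trueRun (p+1) <+: run s s := h1 ▸ h2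
  rw [g, getD_prefix h3 (by have := trueRun_length (p+1); omega)]
  rfl


lemma f_eq_getD' {u p : ℕ} (h : p < (trueRun u).length) : f p = (trueRun u).getD p 0 := by
  rcases le_total (p + 1) u with h' | h'
  · exact f_eq_getD h'
  · rw [f, getD_prefix (trueRun_prefix h') h]

lemma alpha_false_of_evaln {c : Code} {α : ℕ → Bool}
    (hc : ∀ n, eval c n = Part.some (Encodable.encode (α n)))
    {s' m : ℕ} (h : evaln s' c m = some 0) : α m = false := by
  have h0 : (0 : ℕ) ∈ eval c m := evaln_sound (by rw [Option.mem_def]; exact h)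
  rw [hc m] at h0
  have : Encodable.encode (α m) = 0 := by
    rw [Part.mem_some_iff] at h0; omega
  cases hm : α m
  · rfl
  · rw [hm] at this; exact absurd this (by decide)

lemma search_succeeds {c : Code} {α : ℕ → Bool}
    (hc : ∀ n, eval c n = Part.some (Encodable.encode (α n)))
    (hinf : ∀ m, ∃ k, m ≤ k ∧ α k = false) (c0 k : ℕ) :
    ∃ s', k ≤ (cands s' (Encodable.encode c) c0).length := by
  induction k with
  | zero => exact ⟨0, Nat.zero_le _⟩
  | succ k ih =>
    obtain ⟨s', hs'⟩ := ih
    obtain ⟨m, hm1, hm2⟩ := hinf (max s' c0 + 1)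
    have h0 : (0 : ℕ) ∈ eval c m := by
      rw [hc m, hm2]
      exact Part.mem_some_iff.2 (by decide)
    obtain ⟨k₀, hk₀⟩ := evaln_complete.1 h0
    set s'' := max k₀ (max m s') with hs''
    have hmem : m ∈ cands s'' (Encodable.encode c) c0 := by
      rw [mem_cands, Denumerable.ofNat_encode]
      refine ⟨by omega, by omega, ?_⟩
      have := evaln_mono (k₁ := k₀) (k₂ := s'') (by omega) hk₀
      rwa [Option.mem_def] at this
    have hnot : m ∉ cands s' (Encodable.encode c) c0 := by
      intro hmm
      have := (mem_cands.1 hmm).1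
      omega
    have hsub : (cands s' (Encodable.encode c) c0).toFinset ⊆
        (cands s'' (Encodable.encode c) c0).toFinset := by
      intro x hx
      rw [List.mem_toFinset] at hx ⊢
      exact cands_mono (by omega) hx
    have hins : insert m (cands s' (Encodable.encode c) c0).toFinset ⊆
        (cands s'' (Encodable.encode c) c0).toFinset := by
      intro x hx
      rcases Finset.mem_insert.1 hx with rfl | hx
      · rw [List.mem_toFinset]; exact hmem
      · exact hsub hx
    refine ⟨s'', ?_⟩
    calc k + 1 ≤ (cands s' (Encodable.encode c) c0).toFinset.card + 1 := by
          rw [List.toFinset_card_of_nodup (cands_nodup _ _ _)]; omega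
      _ = (insert m (cands s' (Encodable.encode c) c0).toFinset).card := by
          rw [Finset.card_insert_of_notMem (by rwa [List.mem_toFinset])]
      _ ≤ (cands s'' (Encodable.encode c) c0).toFinset.card := Finset.card_le_card hins
      _ ≤ (cands s'' (Encodable.encode c) c0).length := List.toFinset_card_le _

lemma good_block {c : Code} {α : ℕ → Bool}
    (hc : ∀ n, eval c n = Part.some (Encodable.encode (α n)))
    (hinf : ∀ m, ∃ k, m ≤ k ∧ α k = false) (t : ℕ)
    (ht : t.unpair.1 = Encodable.encode c) :
    ∃ bl, trueRun (t+1) = trueRun t ++ bl ∧ bl.length = 2 * (trueRun t).length + 2 ∧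
      ∀ m ∈ bl, α m = false := by
  obtain ⟨S, hS⟩ := trueRun_succ t
  set l := trueRun t with hl
  set c0 := lst l with hc0
  set k := 2 * l.length + 2 with hk
  obtain ⟨s', hs'⟩ := search_succeeds hc hinf c0 k
  set s := max S s' with hsdef
  have hstep : trueRun (t+1) = step s t l := hS s (le_max_left _ _)
  have hbmem : myTake k (cands s' (Encodable.encode c) c0) ∈
      blocks s t.unpair.1 c0 k := by
    rw [ht, blocks, List.mem_filterMap]
    exact ⟨s', by rw [List.mem_range]; omega, by rw [if_pos hs']⟩
  rcases hB : blocks s t.unpair.1 c0 k with - | ⟨b, bs⟩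
  · rw [hB] at hbmem; cases hbmem
  · have hbmem' : b ∈ blocks s t.unpair.1 c0 k := by
      rw [hB]; exact List.mem_cons_self
    rw [ht] at hbmem'
    obtain ⟨s₂, hlen₂, hbeq₂⟩ := blocks_mem hbmem'
    have hbsub : b <+ cands s₂ (Encodable.encode c) c0 := by
      rw [hbeq₂, myTake_eq]; exact List.take_sublist _ _
    refine ⟨b, ?_, ?_, ?_⟩
    · rw [hstep, step, hB]
      rfl
    · rw [hbeq₂, myTake_eq, List.length_take]; omega
    · intro m hm
      have hmc := hbsub.mem hm
      rw [mem_cands, Denumerable.ofNat_encode] at hmc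
      exact alpha_false_of_evaln hc hmc.2.2

end FreqProof

theorem frequency_fails_to_converge_to_half :
    ∃ f : ℕ → ℕ,
      StrictMono f ∧ f 0 = 0 ∧
      (∃ g : ℕ → ℕ → ℕ, Computable₂ g ∧ ∀ p, ∃ N, ∀ s, N ≤ s → g s p = f p) ∧
      ∀ α : ℕ → Bool, Computable α → (∀ m, ∃ k, m ≤ k ∧ α k = false) →
        ¬ Filter.Tendsto
            (fun n => (((Finset.Iic n).filter (fun p =>
              Int.fract ((∏ i ∈ Finset.range p,
                ((2 : ℝ) ^ (f (i + 1) - f i))) * binVal α)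
                ∈ Set.Icc (0 : ℝ) (1 / 2))).card : ℝ) / (n : ℝ))
            Filter.atTop (nhds (1 / 2)) := by
  classical
  refine ⟨FreqProof.f, FreqProof.f_strictMono, FreqProof.f_zero,
    ⟨FreqProof.g, FreqProof.g_computable, FreqProof.g_lim⟩, ?_⟩
  intro α hα hinf hT
  have h1 : Computable fun n => Encodable.encode (α n) := Computable.encode.comp hα
  have h2 : Nat.Partrec fun n => (Encodable.encode (α n) : ℕ) :=
    Partrec.nat_iff.1 h1.partrec
  obtain ⟨c, hcc⟩ := Nat.Partrec.Code.exists_code.1 h2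
  have hc : ∀ n, Nat.Partrec.Code.eval c n = Part.some (Encodable.encode (α n)) := by
    intro n; rw [hcc]; rfl
  have hev : ∀ᶠ n : ℕ in Filter.atTop,
      (((Finset.Iic n).filter (fun p =>
        Int.fract ((∏ i ∈ Finset.range p,
          ((2 : ℝ) ^ (FreqProof.f (i + 1) - FreqProof.f i))) * binVal α)
          ∈ Set.Icc (0 : ℝ) (1 / 2))).card : ℝ) / (n : ℝ) < 2/3 :=
    hT.eventually (gt_mem_nhds (by norm_num : (1/2 : ℝ) < 2/3))
  obtain ⟨N, hN⟩ := Filter.eventually_atTop.1 hev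
  set t := Nat.pair (Encodable.encode c) N with htdef
  have ht : t.unpair.1 = Encodable.encode c := by rw [htdef, Nat.unpair_pair]
  obtain ⟨bl, hbl, hbllen, hblmem⟩ := FreqProof.good_block hc hinf t ht
  set L := (FreqProof.trueRun t).length with hL
  have hL1 : t + 1 ≤ L := FreqProof.trueRun_length t
  have htN : N ≤ t := Nat.right_le_pair _ _
  set n := 3 * L + 1 with hn
  have hlen1 : (FreqProof.trueRun (t+1)).length = 3 * L + 2 := by
    rw [hbl, List.length_append, hbllen]; omega
  have hgood : ∀ p, L ≤ p → p ≤ n →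
      Int.fract ((∏ i ∈ Finset.range p,
        ((2 : ℝ) ^ (FreqProof.f (i + 1) - FreqProof.f i))) * binVal α)
        ∈ Set.Icc (0 : ℝ) (1 / 2) := by
    intro p hp1 hp2
    have hplen : p < (FreqProof.trueRun (t+1)).length := by omega
    have hfp : FreqProof.f p = bl.getD (p - L) 0 := by
      rw [FreqProof.f_eq_getD' hplen, hbl, List.getD_append_right _ _ _ _ (by omega)]
    have hmem : bl.getD (p - L) 0 ∈ bl := by
      have hidx : p - L < bl.length := by omega
      rw [List.getD_eq_getElem _ _ hidx]
      exact List.getElem_mem _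
    have hfalse : α (FreqProof.f p) = false := by rw [hfp]; exact hblmem _ hmem
    rw [FreqProof.prod_pow_eq FreqProof.f FreqProof.f_strictMono.monotone
      FreqProof.f_zero p]
    exact FreqProof.fract_mem_Icc α hinf _ hfalse
  have hsubset : Finset.Icc L n ⊆ (Finset.Iic n).filter (fun p =>
      Int.fract ((∏ i ∈ Finset.range p,
        ((2 : ℝ) ^ (FreqProof.f (i + 1) - FreqProof.f i))) * binVal α)
        ∈ Set.Icc (0 : ℝ) (1 / 2)) := by
    intro p hp
    rw [Finset.mem_Icc] at hp
    rw [Finset.mem_filter, Finset.mem_Iic]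
    exact ⟨hp.2, hgood p hp.1 hp.2⟩
  have hcard : 2 * L + 2 ≤ ((Finset.Iic n).filter (fun p =>
      Int.fract ((∏ i ∈ Finset.range p,
        ((2 : ℝ) ^ (FreqProof.f (i + 1) - FreqProof.f i))) * binVal α)
        ∈ Set.Icc (0 : ℝ) (1 / 2))).card := by
    have := Finset.card_le_card hsubset
    rw [Nat.card_Icc] at this
    omega
  have hnN : N ≤ n := by omega
  have hlt := hN n hnN
  have hge : (2/3 : ℝ) ≤ (((Finset.Iic n).filter (fun p =>
      Int.fract ((∏ i ∈ Finset.range p,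
        ((2 : ℝ) ^ (FreqProof.f (i + 1) - FreqProof.f i))) * binVal α)
        ∈ Set.Icc (0 : ℝ) (1 / 2))).card : ℝ) / (n : ℝ) := by
    have hnpos : (0 : ℝ) < (n : ℝ) := by
      have h0 : 0 < n := by omega
      exact_mod_cast h0
    rw [le_div_iff₀ hnpos]
    have hcard2 : ((2 * L + 2 : ℕ) : ℝ) ≤ (((Finset.Iic n).filter (fun p =>
        Int.fract ((∏ i ∈ Finset.range p,
          ((2 : ℝ) ^ (FreqProof.f (i + 1) - FreqProof.f i))) * binVal α)
          ∈ Set.Icc (0 : ℝ) (1 / 2))).card : ℝ) := by exact_mod_cast hcard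
    have hnval : ((n : ℕ) : ℝ) = 3 * (L : ℝ) + 1 := by rw [hn]; push_cast; ring
    push_cast at hcard2
    rw [hnval]
    linarith
  linarith
end

section
/- For every countable family (α_e)_{e∈ℕ} of binary sequences α_e : ℕ → Bool, none of which ends in an infinite string of 1's, there exists a strictly increasing function f : ℕ → ℕ with f(0) = 0 and f(3^{t+1} − 1) ≤ 2·(3^{t+1} − 1) for all t, such that, setting q_n = 2^{f(n+1) − f(n)} and Q = (q_n)_{n∈ℕ}, no real x_{α_e} = Σ_{n∈ℕ} α_e(n)·2^{−(n+1)} is Q-distribution-normal. -/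
open scoped Classical

namespace Diag

/-- The index `e` scheduled at position `n`: position `n` lies in the block
`[27^s - 1, 27^(s+1) - 1)` where `s = log 27 (n+1)`, and block `s` is dedicated
to `e = (unpair s).1`. -/
def sched (n : ℕ) : ℕ := (Nat.unpair (Nat.log 27 (n + 1))).1

variable (α : ℕ → ℕ → Bool)

/-- The diagonalizing function: steps of size 1 or 2, chosen to avoid landing on
the binary pattern "01" of the currently scheduled sequence. -/
def F : ℕ → ℕ
  | 0 => 0
  | n + 1 => F n +
      (if α (sched n) (F n + 1) = false ∧ α (sched n) (F n + 2) = true then 2 else 1)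

lemma F_zero : F α 0 = 0 := rfl

lemma F_succ_lt (n : ℕ) : F α n < F α (n + 1) := by
  show F α n < F α n + _
  split <;> omega

lemma F_strictMono : StrictMono (F α) := strictMono_nat_of_lt_succ (F_succ_lt α)

lemma F_le (n : ℕ) : F α n ≤ 2 * n := by
  induction n with
  | zero => simp [F_zero]
  | succ n ih =>
      have : F α (n+1) ≤ F α n + 2 := by show F α n + _ ≤ _; split <;> omega
      omega

lemma F_notbad (n : ℕ) :
    ¬ (α (sched n) (F α (n + 1)) = false ∧ α (sched n) (F α (n + 1) + 1) = true) := by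
  by_cases h : α (sched n) (F α n + 1) = false ∧ α (sched n) (F α n + 2) = true
  · have e : F α (n + 1) = F α n + 2 := by simp [F, h]
    rw [e]
    rintro ⟨h1, -⟩
    rw [h.2] at h1; exact (Bool.true_eq_false.mp h1).elim
  · have e : F α (n + 1) = F α n + 1 := by simp [F, h]
    rw [e]
    intro hc
    exact h ⟨hc.1, by simpa using hc.2⟩

lemma g_nonneg (β : ℕ → Bool) (n : ℕ) : 0 ≤ (if β n then (1:ℝ) else 0) / 2 ^ (n+1) := by
  positivity

lemma g_le (β : ℕ → Bool) (n : ℕ) :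
    (if β n then (1:ℝ) else 0) / 2 ^ (n+1) ≤ (1/2 : ℝ) ^ (n+1) := by
  rw [div_pow, one_pow]
  split
  · exact le_refl _
  · rw [zero_div]; positivity

lemma summable_geom : Summable (fun n : ℕ => (1/2 : ℝ) ^ (n+1)) := by
  exact (summable_geometric_of_lt_one (by norm_num) (by norm_num)).comp_injective
    (add_left_injective 1)

lemma summable_g (β : ℕ → Bool) :
    Summable (fun n => (if β n then (1:ℝ) else 0) / 2 ^ (n+1)) :=
  Summable.of_nonneg_of_le (g_nonneg β) (g_le β) summable_geom

lemma tsum_geom : ∑' n : ℕ, (1/2 : ℝ) ^ (n+1) = 1 := by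
  have h := tsum_geometric_of_lt_one (r := (1/2:ℝ)) (by norm_num) (by norm_num)
  calc ∑' n : ℕ, (1/2 : ℝ) ^ (n+1) = ∑' n : ℕ, (1/2:ℝ) * (1/2)^n := by
        congr 1; funext n; rw [pow_succ]; ring
    _ = (1/2) * ∑' n : ℕ, (1/2:ℝ)^n := tsum_mul_left
    _ = 1 := by rw [h]; norm_num

lemma binVal_nonneg (β : ℕ → Bool) : 0 ≤ binVal β :=
  tsum_nonneg (g_nonneg β)

lemma binVal_lt_one (β : ℕ → Bool) (k : ℕ) (hk : β k = false) : binVal β < 1 := by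
  have h : binVal β < ∑' n : ℕ, (1/2 : ℝ) ^ (n+1) := by
    refine Summable.tsum_lt_tsum_of_nonneg (i := k) (g_nonneg β) (g_le β) ?_ summable_geom
    rw [hk]; rw [if_neg (by simp), zero_div]; positivity
  rwa [tsum_geom] at h

lemma binVal_ge_half (β : ℕ → Bool) (h : β 0 = true) : (1/2 : ℝ) ≤ binVal β := by
  have := Summable.le_tsum (summable_g β) 0 (fun j _ => g_nonneg β j)
  rw [h] at this; simpa [binVal] using this

lemma binVal_shift (β : ℕ → Bool) (m : ℕ) :
    binVal β = (∑ i ∈ Finset.range m, (if β i then (1:ℝ) else 0) / 2 ^ (i+1))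
      + (1 / 2 ^ m) * binVal (fun n => β (n + m)) := by
  rw [binVal, ← Summable.sum_add_tsum_nat_add m (summable_g β)]
  congr 1
  rw [binVal, ← tsum_mul_left]
  congr 1; funext n
  rw [pow_add]
  field_simp
  ring_nf

lemma fract_pow_binVal (β : ℕ → Bool) (m k : ℕ) (hk : β (k + m) = false) :
    Int.fract ((2:ℝ) ^ m * binVal β) = binVal (fun n => β (n + m)) := by
  have hlt : binVal (fun n => β (n + m)) < 1 := binVal_lt_one _ k hk
  have hge : 0 ≤ binVal (fun n => β (n + m)) := binVal_nonneg _
  have key : (2:ℝ) ^ m * binVal β =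
      (((Finset.range m).sum (fun i => if β i then 2 ^ (m - i - 1) else 0) : ℕ) : ℝ)
        + binVal (fun n => β (n + m)) := by
    rw [binVal_shift β m]
    rw [mul_add]
    have h2 : (2:ℝ) ^ m * ((1 / 2 ^ m) * binVal (fun n => β (n + m)))
        = binVal (fun n => β (n + m)) := by
      field_simp
    rw [h2]
    congr 1
    rw [Finset.mul_sum]
    push_cast
    refine Finset.sum_congr rfl (fun i hi => ?_)
    rw [Finset.mem_range] at hi
    split
    · rw [mul_one_div]
      rw [show m - i - 1 = m - (i+1) by omega, pow_sub₀ (2:ℝ) (by norm_num) (by omega),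
        div_eq_mul_inv]
    · simp
  rw [key, Int.fract_natCast_add, Int.fract_eq_self.mpr ⟨hge, hlt⟩]

lemma fract_not_mem (β : ℕ → Bool) (hinf : ∀ m, ∃ k, m ≤ k ∧ β k = false) (m : ℕ)
    (hgood : ¬ (β m = false ∧ β (m + 1) = true)) :
    Int.fract ((2:ℝ) ^ m * binVal β) ∉ Set.Icc (1/4 : ℝ) (3/8) := by
  obtain ⟨k0, hk0, hk0f⟩ := hinf m
  rw [fract_pow_binVal β m (k0 - m) (by rw [Nat.sub_add_cancel hk0]; exact hk0f)]
  set γ : ℕ → Bool := fun n => β (n + m) with hγ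
  cases hβm : β m with
  | true =>
      have h : (1/2 : ℝ) ≤ binVal γ := binVal_ge_half γ (by simpa [hγ] using hβm)
      intro hc
      have := hc.2
      linarith
  | false =>
      have h1 : β (m + 1) = false := by
        cases h1 : β (m + 1)
        · rfl
        · exact absurd ⟨hβm, h1⟩ hgood
      obtain ⟨k1, hk1, hk1f⟩ := hinf (m + 2)
      have hshift := binVal_shift γ 2
      have hγ0 : γ 0 = false := by simpa [hγ] using hβm
      have hγ1 : γ 1 = false := by simpa [hγ, add_comm] using h1
      have hlt1 : binVal (fun n => γ (n + 2)) < 1 := by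
        refine binVal_lt_one _ (k1 - m - 2) ?_
        show β ((k1 - m - 2) + 2 + m) = false
        rw [show k1 - m - 2 + 2 + m = k1 by omega]
        exact hk1f
      have hsum : (∑ i ∈ Finset.range 2, (if γ i then (1:ℝ) else 0) / 2 ^ (i+1)) = 0 := by
        rw [Finset.sum_range_succ, Finset.sum_range_one, hγ0, hγ1]
        norm_num
      have : binVal γ < 1/4 := by
        rw [hshift, hsum]
        have : (1 / 2 ^ 2 : ℝ) * binVal (fun n => γ (n + 2)) < (1/2^2) * 1 := by
          exact mul_lt_mul_of_pos_left hlt1 (by norm_num)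
        norm_num at this ⊢
        linarith
      intro hc
      have := hc.1
      linarith

lemma prod_Q (k : ℕ) :
    (∏ i ∈ Finset.range k, ((2 ^ (F α (i + 1) - F α i) : ℕ) : ℝ)) = (2:ℝ) ^ F α k := by
  have : (∏ i ∈ Finset.range k, ((2 ^ (F α (i + 1) - F α i) : ℕ) : ℝ))
      = (2:ℝ) ^ (∑ i ∈ Finset.range k, (F α (i + 1) - F α i)) := by
    push_cast
    rw [Finset.prod_pow_eq_pow_sum]
  rw [this, Finset.sum_range_tsub (F_strictMono α).monotone, F_zero, Nat.sub_zero]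

end Diag

lemma Diag.crux (c : ℕ → ℕ)
    (h : Filter.Tendsto (fun n => ((c n : ℝ) / (n : ℝ))) Filter.atTop (nhds (1/8)))
    (hb : ∀ N : ℕ, ∃ n, N ≤ n ∧ 0 < n ∧ (c n : ℝ) ≤ (n : ℝ) / 10) : False := by
  have hev : ∀ᶠ n in Filter.atTop, (1/10 : ℝ) < (c n : ℝ) / (n : ℝ) :=
    h.eventually (eventually_gt_nhds (by norm_num))
  rw [Filter.eventually_atTop] at hev
  obtain ⟨N, hN⟩ := hev
  obtain ⟨n, hnN, hnpos, hle⟩ := hb N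
  have h1 := hN n hnN
  have hnpos' : (0:ℝ) < (n : ℝ) := by exact_mod_cast hnpos
  have : (c n : ℝ) / (n : ℝ) ≤ 1/10 := by
    rw [div_le_div_iff₀ hnpos' (by norm_num)]
    linarith
  linarith

theorem diagonalize_countable_family
    (α : ℕ → ℕ → Bool) (hα : ∀ e m, ∃ k, m ≤ k ∧ α e k = false) :
    ∃ f : ℕ → ℕ,
      StrictMono f ∧ f 0 = 0 ∧
      (∀ t : ℕ, f (3 ^ (t + 1) - 1) ≤ 2 * (3 ^ (t + 1) - 1)) ∧
      (∀ e : ℕ, ¬ QDistNormal (fun n => 2 ^ (f (n + 1) - f n)) (binVal (α e))) := by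
  refine ⟨Diag.F α, Diag.F_strictMono α, Diag.F_zero α,
    fun t => Diag.F_le α _, fun e hQ => ?_⟩
  have htend := hQ (1/4) (3/8) (by norm_num) (by norm_num) (by norm_num)
  rw [show (3/8 : ℝ) - 1/4 = 1/8 by norm_num] at htend
  refine Diag.crux _ htend ?_
  intro N
  -- pick a large block dedicated to e
  set s := Nat.pair e N with hs
  have hsN : N ≤ s := Nat.right_le_pair e N
  have h27 : 1 ≤ 27 ^ s := Nat.one_le_pow _ _ (by norm_num)
  have h27' : 27 ^ s * 27 = 27 ^ (s + 1) := (pow_succ 27 s).symm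
  refine ⟨27 ^ (s + 1) - 1, ?_, by omega, ?_⟩
  · have : s < 27 ^ s := Nat.lt_pow_self (by norm_num)
    omega
  -- count bound: the filtered set is contained in range (27^s)
  have hsub : ((Finset.range (27 ^ (s + 1) - 1)).filter
      (fun k => Int.fract ((∏ i ∈ Finset.range k,
        (((fun n => 2 ^ (Diag.F α (n + 1) - Diag.F α n)) i : ℕ) : ℝ)) *
          binVal (α e)) ∈ Set.Icc (1/4 : ℝ) (3/8))) ⊆ Finset.range (27 ^ s) := by
    intro k hk
    rw [Finset.mem_filter, Finset.mem_range] at hk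
    rw [Finset.mem_range]
    by_contra hge
    push_neg at hge
    obtain ⟨hkn, hmem⟩ := hk
    have hk1 : 1 ≤ k := le_trans h27 hge
    have hlog : Nat.log 27 k = s :=
      Nat.log_eq_of_pow_le_of_lt_pow hge (by omega)
    have hsched : Diag.sched (k - 1) = e := by
      unfold Diag.sched
      rw [show k - 1 + 1 = k by omega, hlog, hs, Nat.unpair_pair]
    have hnb := Diag.F_notbad α (k - 1)
    rw [hsched, show k - 1 + 1 = k by omega] at hnb
    have hnotmem := Diag.fract_not_mem (α e) (hα e) (Diag.F α k) hnb
    simp only at hmem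
    rw [Diag.prod_Q α k] at hmem
    exact hnotmem hmem
  have hcard := Finset.card_le_card hsub
  rw [Finset.card_range] at hcard
  -- numeric conclusion
  have h10 : (10 : ℕ) * 27 ^ s ≤ 27 ^ (s + 1) - 1 := by omega
  have hcast : ((10:ℝ) * (27:ℝ) ^ s) ≤ ((27 ^ (s + 1) - 1 : ℕ) : ℝ) := by
    exact_mod_cast Nat.cast_le.mpr h10
  calc (((Finset.range (27 ^ (s + 1) - 1)).filter
      (fun k => Int.fract ((∏ i ∈ Finset.range k,
        (((fun n => 2 ^ (Diag.F α (n + 1) - Diag.F α n)) i : ℕ) : ℝ)) *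
          binVal (α e)) ∈ Set.Icc (1/4 : ℝ) (3/8))).card : ℝ)
      ≤ ((27:ℝ) ^ s) := by exact_mod_cast Nat.cast_le.mpr hcard
    _ ≤ ((27 ^ (s + 1) - 1 : ℕ) : ℝ) / 10 := by
        rw [le_div_iff₀ (by norm_num : (0:ℝ) < 10)]
        linarith
end
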